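/- arXiv:2103.10471 — 6 statements merged into one kernel-verified Lean document; each statement's English description precedes it below -/
import Mathlib

section
/- Let α ∈ (0,1) and let f be a pmf on ℕ with finite mean, with pgf Ψ. Then the sequence of partial products φ_{n+1}(z) = ∏_{i=0}^{n} Ψ(1 − α^i + α^i z) converges uniformly on the interval [0,1] as n → ∞. -/
open Filter Topology

lemma one_sub_prod_le_sum_one_sub (s : Finset ℕ) (a : ℕ → ℝ)
    (h0 : ∀ i ∈ s, 0 ≤ a i) (h1 : ∀ i ∈ s, a i ≤ 1) :
    1 - ∏ i ∈ s, a i ≤ ∑ i ∈ s, (1 - a i) := by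
  induction s using Finset.cons_induction with
  | empty => simp
  | cons j s hj ih =>
    rw [Finset.prod_cons, Finset.sum_cons]
    have hP0 : 0 ≤ ∏ i ∈ s, a i :=
      Finset.prod_nonneg fun i hi => h0 i (Finset.mem_cons_of_mem hi)
    have hP1 : ∏ i ∈ s, a i ≤ 1 :=
      Finset.prod_le_one (fun i hi => h0 i (Finset.mem_cons_of_mem hi))
        (fun i hi => h1 i (Finset.mem_cons_of_mem hi))
    have haj0 : 0 ≤ a j := h0 j (Finset.mem_cons_self j s)
    have haj1 : a j ≤ 1 := h1 j (Finset.mem_cons_self j s)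
    have ih' := ih (fun i hi => h0 i (Finset.mem_cons_of_mem hi))
      (fun i hi => h1 i (Finset.mem_cons_of_mem hi))
    nlinarith [mul_nonneg (sub_nonneg.2 haj1) (sub_nonneg.2 hP1)]

/-- Let `α ∈ (0,1)` and let `f` be a pmf on `ℕ` with finite mean, with pgf `Ψ`.
Then the sequence of partial products `φ_{n+1}(z) = ∏_{i=0}^{n} Ψ(1 − α^i + α^i z)`
converges uniformly on the interval `[0,1]` as `n → ∞`. -/
theorem stmt_0 (α : ℝ) (hα : α ∈ Set.Ioo (0 : ℝ) 1)
    (f : ℕ → ℝ) (hf0 : ∀ k, 0 ≤ f k) (hf1 : HasSum f 1)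
    (hmean : Summable fun k : ℕ => (k : ℝ) * f k)
    (Ψ : ℝ → ℝ) (hΨ : ∀ z, Ψ z = ∑' k : ℕ, f k * z ^ k) :
    ∃ φ : ℝ → ℝ, TendstoUniformlyOn
      (fun n z => ∏ i ∈ Finset.range (n + 1), Ψ (1 - α ^ i + α ^ i * z))
      φ atTop (Set.Icc 0 1) := by
  obtain ⟨hα0, hα1⟩ := hα
  set M : ℝ := ∑' k : ℕ, (k : ℝ) * f k with hM
  have hM0 : 0 ≤ M := tsum_nonneg fun k => mul_nonneg (Nat.cast_nonneg k) (hf0 k)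
  have hfs : Summable f := hf1.summable
  have hft : ∑' k, f k = 1 := hf1.tsum_eq
  -- basic bounds on Ψ on [0,1]
  have hΨbound : ∀ x ∈ Set.Icc (0 : ℝ) 1, 0 ≤ Ψ x ∧ Ψ x ≤ 1 ∧ 1 - Ψ x ≤ M * (1 - x) := by
    intro x ⟨hx0, hx1⟩
    have hsx : Summable (fun k => f k * x ^ k) := by
      apply Summable.of_nonneg_of_le
        (fun k => mul_nonneg (hf0 k) (pow_nonneg hx0 k))
        (fun k => ?_) hfs
      calc f k * x ^ k ≤ f k * 1 :=
            mul_le_mul_of_nonneg_left (pow_le_one₀ hx0 hx1) (hf0 k)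
        _ = f k := mul_one _
    have h1 : 0 ≤ Ψ x := by
      rw [hΨ]
      exact tsum_nonneg fun k => mul_nonneg (hf0 k) (pow_nonneg hx0 k)
    have h2 : Ψ x ≤ 1 := by
      rw [hΨ, ← hft]
      apply Summable.tsum_le_tsum _ hsx hfs
      intro k
      calc f k * x ^ k ≤ f k * 1 :=
            mul_le_mul_of_nonneg_left (pow_le_one₀ hx0 hx1) (hf0 k)
        _ = f k := mul_one _
    refine ⟨h1, h2, ?_⟩
    -- lower bound via Bernoulli: 1 + k (x-1) ≤ x^k
    have hsl : Summable (fun k : ℕ => f k + (x - 1) * ((k : ℝ) * f k)) :=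
      hfs.add (hmean.mul_left (x - 1))
    have hlow : 1 + (x - 1) * M ≤ Ψ x := by
      have : ∑' k : ℕ, (f k + (x - 1) * ((k : ℝ) * f k)) = 1 + (x - 1) * M := by
        rw [Summable.tsum_add hfs (hmean.mul_left (x - 1)), hft, tsum_mul_left]
      rw [hΨ, ← this]
      apply Summable.tsum_le_tsum _ hsl hsx
      intro k
      have hb : 1 + (k : ℝ) * (x - 1) ≤ x ^ k := by
        have := one_add_mul_le_pow (a := x - 1) (by linarith) k
        simpa using this
      have := mul_le_mul_of_nonneg_left hb (hf0 k)
      nlinarith [this]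
    nlinarith [hlow]
  -- the factors
  have hx_mem : ∀ (i : ℕ), ∀ z ∈ Set.Icc (0 : ℝ) 1,
      (1 - α ^ i + α ^ i * z) ∈ Set.Icc (0 : ℝ) 1 := by
    intro i z ⟨hz0, hz1⟩
    have hαi0 : 0 ≤ α ^ i := pow_nonneg hα0.le i
    have hαi1 : α ^ i ≤ 1 := pow_le_one₀ hα0.le hα1.le
    constructor
    · nlinarith
    · nlinarith
  have hgap : ∀ (i : ℕ), ∀ z ∈ Set.Icc (0 : ℝ) 1,
      1 - Ψ (1 - α ^ i + α ^ i * z) ≤ M * α ^ i := by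
    intro i z hz
    obtain ⟨hz0, hz1⟩ := hz
    have := (hΨbound _ (hx_mem i z ⟨hz0, hz1⟩)).2.2
    have hαi0 : 0 ≤ α ^ i := pow_nonneg hα0.le i
    nlinarith [this, mul_nonneg (mul_nonneg hM0 hαi0) hz0]
  set F : ℕ → ℝ → ℝ :=
    fun n z => ∏ i ∈ Finset.range (n + 1), Ψ (1 - α ^ i + α ^ i * z) with hF
  -- key monotone-difference bound
  have key : ∀ m n : ℕ, m ≤ n → ∀ z ∈ Set.Icc (0 : ℝ) 1,
      0 ≤ F m z - F n z ∧ F m z - F n z ≤ M * α ^ (m + 1) / (1 - α) := by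
    intro m n hmn z hz
    set a : ℕ → ℝ := fun i => Ψ (1 - α ^ i + α ^ i * z) with ha
    have ha0 : ∀ i, 0 ≤ a i := fun i => (hΨbound _ (hx_mem i z hz)).1
    have ha1 : ∀ i, a i ≤ 1 := fun i => (hΨbound _ (hx_mem i z hz)).2.1
    have hsplit : F n z = F m z * ∏ i ∈ Finset.Ico (m + 1) (n + 1), a i := by
      rw [hF]
      exact (Finset.prod_range_mul_prod_Ico a (by omega)).symm
    have hPm0 : 0 ≤ F m z := Finset.prod_nonneg fun i _ => ha0 i
    have hPm1 : F m z ≤ 1 := Finset.prod_le_one (fun i _ => ha0 i) (fun i _ => ha1 i)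
    have hQ0 : 0 ≤ ∏ i ∈ Finset.Ico (m + 1) (n + 1), a i :=
      Finset.prod_nonneg fun i _ => ha0 i
    have hQ1 : ∏ i ∈ Finset.Ico (m + 1) (n + 1), a i ≤ 1 :=
      Finset.prod_le_one (fun i _ => ha0 i) (fun i _ => ha1 i)
    have hQsum : 1 - ∏ i ∈ Finset.Ico (m + 1) (n + 1), a i
        ≤ ∑ i ∈ Finset.Ico (m + 1) (n + 1), (1 - a i) :=
      one_sub_prod_le_sum_one_sub _ a (fun i _ => ha0 i) (fun i _ => ha1 i)
    have hsum1 : ∑ i ∈ Finset.Ico (m + 1) (n + 1), (1 - a i)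
        ≤ M * ∑ i ∈ Finset.Ico (m + 1) (n + 1), α ^ i := by
      rw [Finset.mul_sum]
      exact Finset.sum_le_sum fun i _ => hgap i z hz
    have hsum2 : ∑ i ∈ Finset.Ico (m + 1) (n + 1), α ^ i ≤ α ^ (m + 1) / (1 - α) :=
      geom_sum_Ico_le_of_lt_one hα0.le hα1
    have hbound : 1 - ∏ i ∈ Finset.Ico (m + 1) (n + 1), a i ≤ M * α ^ (m + 1) / (1 - α) := by
      calc 1 - ∏ i ∈ Finset.Ico (m + 1) (n + 1), a i
          ≤ M * ∑ i ∈ Finset.Ico (m + 1) (n + 1), α ^ i := hQsum.trans hsum1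
        _ ≤ M * (α ^ (m + 1) / (1 - α)) := mul_le_mul_of_nonneg_left hsum2 hM0
        _ = M * α ^ (m + 1) / (1 - α) := by ring
    constructor
    · rw [hsplit]; nlinarith
    · rw [hsplit]
      have : F m z * (1 - ∏ i ∈ Finset.Ico (m + 1) (n + 1), a i)
          ≤ M * α ^ (m + 1) / (1 - α) := by
        calc F m z * (1 - ∏ i ∈ Finset.Ico (m + 1) (n + 1), a i)
            ≤ 1 * (1 - ∏ i ∈ Finset.Ico (m + 1) (n + 1), a i) := by
              apply mul_le_mul_of_nonneg_right hPm1; linarith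
          _ = 1 - ∏ i ∈ Finset.Ico (m + 1) (n + 1), a i := one_mul _
          _ ≤ M * α ^ (m + 1) / (1 - α) := hbound
      nlinarith [this]
  -- uniform Cauchy
  have hcauchy : UniformCauchySeqOn F atTop (Set.Icc (0 : ℝ) 1) := by
    rw [Metric.uniformCauchySeqOn_iff]
    intro ε hε
    have htend : Tendsto (fun n : ℕ => M * α ^ (n + 1) / (1 - α)) atTop (𝓝 0) := by
      have h1 : Tendsto (fun n : ℕ => α ^ (n + 1)) atTop (𝓝 0) :=
        (tendsto_pow_atTop_nhds_zero_of_lt_one hα0.le hα1).comp (tendsto_add_atTop_nat 1)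
      have := (h1.const_mul M).div_const (1 - α)
      simpa using this
    have := (htend.eventually (gt_mem_nhds hε)).exists_forall_of_atTop
    obtain ⟨N, hN⟩ := this
    refine ⟨N, fun m hm n hn z hz => ?_⟩
    rcases le_total m n with h | h
    · obtain ⟨hd0, hd1⟩ := key m n h z hz
      rw [Real.dist_eq, abs_of_nonneg hd0]
      calc F m z - F n z ≤ M * α ^ (m + 1) / (1 - α) := hd1
        _ < ε := hN m hm
    · obtain ⟨hd0, hd1⟩ := key n m h z hz
      rw [dist_comm, Real.dist_eq, abs_of_nonneg hd0]
      calc F n z - F m z ≤ M * α ^ (n + 1) / (1 - α) := hd1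
        _ < ε := hN n hn
  have hlim : ∀ z ∈ Set.Icc (0 : ℝ) 1, ∃ l, Tendsto (fun n => F n z) atTop (𝓝 l) :=
    fun z hz => cauchySeq_tendsto_of_complete (hcauchy.cauchySeq hz)
  choose! φ hφ using hlim
  exact ⟨φ, hcauchy.tendstoUniformlyOn_of_tendsto hφ⟩
end

section
/- Let α ∈ (0,1) and let f be a pmf on ℕ with finite mean, with pgf Ψ. Then the function φ(z) = ∏_{i=0}^∞ Ψ(1 − α^i + α^i z) is itself a pgf: there exists a pmf p on ℕ (i.e., p(r) ≥ 0 for all r and ∑_{r=0}^∞ p(r) = 1) such that φ(z) = ∑_{r=0}^∞ p(r)·z^r for every z ∈ [0,1]. -/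
open Filter Finset Topology

private lemma aux_one_sub_pow_le {u : ℝ} (hu0 : 0 ≤ u) (hu1 : u ≤ 1) (k : ℕ) :
    1 - u ^ k ≤ k * (1 - u) := by
  induction k with
  | zero => simp
  | succ k ih =>
      have hpow : u ^ k ≤ 1 := pow_le_one₀ hu0 hu1
      have hpow0 : 0 ≤ u ^ k := pow_nonneg hu0 k
      have : u * (1 - u ^ k) ≤ 1 * (k * (1 - u)) := by
        apply mul_le_mul hu1 ih (by linarith) (by norm_num)
      calc 1 - u ^ (k + 1) = (1 - u) + u * (1 - u ^ k) := by ring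
        _ ≤ (1 - u) + 1 * (k * (1 - u)) := by linarith
        _ = (k + 1 : ℕ) * (1 - u) := by push_cast; ring

private lemma aux_weier (g : ℕ → ℝ) (h0 : ∀ i, 0 ≤ g i) (h1 : ∀ i, g i ≤ 1) (n : ℕ) :
    1 - ∑ i ∈ Finset.range n, (1 - g i) ≤ ∏ i ∈ Finset.range n, g i := by
  induction n with
  | zero => simp
  | succ n ih =>
      have hS : 0 ≤ ∑ i ∈ Finset.range n, (1 - g i) :=
        Finset.sum_nonneg fun i _ => by linarith [h1 i]
      rw [Finset.prod_range_succ, Finset.sum_range_succ]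
      have h2 : (1 - ∑ i ∈ Finset.range n, (1 - g i)) * g n
          ≤ (∏ i ∈ Finset.range n, g i) * g n :=
        mul_le_mul_of_nonneg_right ih (h0 n)
      nlinarith [h0 n, h1 n]

noncomputable def auxP (α : ℝ) (f : ℕ → ℝ) (i r : ℕ) : ℝ :=
  ∑' k : ℕ, f k * ((k.choose r : ℝ) * (α ^ i) ^ r * (1 - α ^ i) ^ (k - r))

noncomputable def auxQ (α : ℝ) (f : ℕ → ℝ) : ℕ → ℕ → ℝ
  | 0 => fun r => if r = 0 then 1 else 0
  | n + 1 => fun r => ∑ j ∈ Finset.range (r + 1), auxQ α f n j * auxP α f n (r - j)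

section Aux

variable {α : ℝ} {f : ℕ → ℝ}

private lemma aux_summable_pow (hf0 : ∀ k, 0 ≤ f k) (hf1 : HasSum f 1)
    {u : ℝ} (hu0 : 0 ≤ u) (hu1 : u ≤ 1) : Summable fun k : ℕ => f k * u ^ k :=
  hf1.summable.of_nonneg_of_le (fun k => mul_nonneg (hf0 k) (pow_nonneg hu0 k))
    (fun k => by
      have : u ^ k ≤ 1 := pow_le_one₀ hu0 hu1
      nlinarith [hf0 k, pow_nonneg hu0 k])

private lemma aux_Phi_nonneg (hf0 : ∀ k, 0 ≤ f k) {u : ℝ} (hu0 : 0 ≤ u) :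
    0 ≤ ∑' k : ℕ, f k * u ^ k :=
  tsum_nonneg fun k => mul_nonneg (hf0 k) (pow_nonneg hu0 k)

private lemma aux_Phi_le_one (hf0 : ∀ k, 0 ≤ f k) (hf1 : HasSum f 1)
    {u : ℝ} (hu0 : 0 ≤ u) (hu1 : u ≤ 1) : (∑' k : ℕ, f k * u ^ k) ≤ 1 := by
  rw [← hf1.tsum_eq]
  refine Summable.tsum_le_tsum (fun k => ?_) (aux_summable_pow hf0 hf1 hu0 hu1) hf1.summable
  have : u ^ k ≤ 1 := pow_le_one₀ hu0 hu1
  nlinarith [hf0 k, pow_nonneg hu0 k]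

/-- Key Lipschitz bound at 1. -/
private lemma aux_Phi_lip (hf0 : ∀ k, 0 ≤ f k) (hf1 : HasSum f 1)
    (hmean : Summable fun k : ℕ => (k : ℝ) * f k)
    {u : ℝ} (hu0 : 0 ≤ u) (hu1 : u ≤ 1) :
    1 - ∑' k : ℕ, f k * u ^ k ≤ (∑' k : ℕ, (k : ℝ) * f k) * (1 - u) := by
  have hs := aux_summable_pow hf0 hf1 hu0 hu1
  have hdiff : HasSum (fun k => f k - f k * u ^ k) (1 - ∑' k : ℕ, f k * u ^ k) :=
    hf1.sub hs.hasSum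
  rw [← hdiff.tsum_eq]
  have hR : Summable fun k : ℕ => (k : ℝ) * f k * (1 - u) := hmean.mul_right _
  calc ∑' k : ℕ, (f k - f k * u ^ k)
      ≤ ∑' k : ℕ, (k : ℝ) * f k * (1 - u) := by
        refine Summable.tsum_le_tsum (fun k => ?_) hdiff.summable hR
        have h1 : f k - f k * u ^ k = f k * (1 - u ^ k) := by ring
        have h2 : f k * (1 - u ^ k) ≤ f k * (k * (1 - u)) :=
          mul_le_mul_of_nonneg_left (aux_one_sub_pow_le hu0 hu1 k) (hf0 k)
        rw [h1]; linarith [h2]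
    _ = (∑' k : ℕ, (k : ℝ) * f k) * (1 - u) := tsum_mul_right

private lemma auxP_nonneg (hα : 0 < α) (hα1 : α < 1) (hf0 : ∀ k, 0 ≤ f k) (i r : ℕ) :
    0 ≤ auxP α f i r := by
  have ha1 : α ^ i ≤ 1 := pow_le_one₀ hα.le hα1.le
  refine tsum_nonneg fun k => mul_nonneg (hf0 k) ?_
  have h1 : (0:ℝ) ≤ 1 - α ^ i := by linarith
  have h2 : (0:ℝ) ≤ α ^ i := by positivity
  positivity

private lemma auxP_hasSum (hα : 0 < α) (hα1 : α < 1) (hf0 : ∀ k, 0 ≤ f k) (hf1 : HasSum f 1)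
    (i : ℕ) {z : ℝ} (hz0 : 0 ≤ z) (hz1 : z ≤ 1) :
    HasSum (fun r : ℕ => auxP α f i r * z ^ r)
      (∑' k : ℕ, f k * (1 - α ^ i + α ^ i * z) ^ k) := by
  set a : ℝ := α ^ i with ha
  have ha0 : 0 < a := pow_pos hα i
  have ha1 : a ≤ 1 := pow_le_one₀ hα.le hα1.le
  set b : ℝ := 1 - a with hb
  have hb0 : 0 ≤ b := by simp only [hb]; linarith
  have hu0 : 0 ≤ a * z + b := by positivity
  have hu1 : a * z + b ≤ 1 := by
    have : a * z ≤ a := by nlinarith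
    simp only [hb]; linarith
  set t : ℕ × ℕ → ℝ :=
    fun q => f q.1 * ((q.1.choose q.2 : ℝ) * (a * z) ^ q.2 * b ^ (q.1 - q.2)) with htdef
  have ht0 : ∀ q : ℕ × ℕ, 0 ≤ t q := fun q =>
    mul_nonneg (hf0 q.1) (by positivity)
  have hvanish : ∀ k : ℕ, ∀ r ∉ Finset.range (k + 1), t (k, r) = 0 := by
    intro k r hr
    have hkr : k < r := by
      have := Finset.mem_range.not.mp hr
      omega
    simp [htdef, Nat.choose_eq_zero_of_lt hkr]
  have hrow_sum : ∀ k : ℕ, ∑' r : ℕ, t (k, r) = f k * (a * z + b) ^ k := by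
    intro k
    rw [tsum_eq_sum (hvanish k), add_pow, Finset.mul_sum]
    exact Finset.sum_congr rfl fun r hr => by simp only [htdef]; ring
  have hrow : ∀ k : ℕ, Summable fun r : ℕ => t (k, r) := fun k =>
    summable_of_ne_finset_zero (hvanish k)
  have hcol_sums : Summable fun k : ℕ => ∑' r : ℕ, t (k, r) := by
    simp only [hrow_sum]
    exact aux_summable_pow hf0 hf1 hu0 hu1
  have hts : Summable t := (summable_prod_of_nonneg ht0).mpr ⟨hrow, hcol_sums⟩
  have hswap : Summable fun q : ℕ × ℕ => t q.swap :=
    (Equiv.prodComm ℕ ℕ).summable_iff.mpr hts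
  have hcols := (summable_prod_of_nonneg fun q => ht0 q.swap).mp hswap
  have hPz : ∀ r : ℕ, auxP α f i r * z ^ r = ∑' k : ℕ, t (k, r) := by
    intro r
    rw [auxP, ← tsum_mul_right]
    exact tsum_congr fun k => by simp only [htdef]; ring
  have hsum_r : Summable fun r : ℕ => auxP α f i r * z ^ r := by
    simp only [hPz]
    exact hcols.2
  have key : ∑' r : ℕ, auxP α f i r * z ^ r = ∑' k : ℕ, f k * (1 - α ^ i + α ^ i * z) ^ k := by
    have e1 : (1:ℝ) - α ^ i + α ^ i * z = a * z + b := by rw [hb, ha]; ring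
    calc ∑' r : ℕ, auxP α f i r * z ^ r = ∑' r : ℕ, ∑' k : ℕ, t (k, r) := tsum_congr hPz
      _ = ∑' q : ℕ × ℕ, t q.swap := (Summable.tsum_prod' hswap fun r => hcols.1 r).symm
      _ = ∑' q : ℕ × ℕ, t q := (Equiv.prodComm ℕ ℕ).tsum_eq t
      _ = ∑' k : ℕ, ∑' r : ℕ, t (k, r) := Summable.tsum_prod' hts hrow
      _ = ∑' k : ℕ, f k * (a * z + b) ^ k := tsum_congr hrow_sum
      _ = ∑' k : ℕ, f k * (1 - α ^ i + α ^ i * z) ^ k := by rw [e1]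
  exact hsum_r.hasSum_iff.mpr key

private lemma auxP_pmf (hα : 0 < α) (hα1 : α < 1) (hf0 : ∀ k, 0 ≤ f k) (hf1 : HasSum f 1)
    (i : ℕ) : HasSum (auxP α f i) 1 := by
  have h := auxP_hasSum (f := f) hα hα1 hf0 hf1 i (z := 1) zero_le_one le_rfl
  have e1 : (1 : ℝ) - α ^ i + α ^ i * 1 = 1 := by ring
  rw [e1] at h
  simp only [one_pow, mul_one] at h
  rwa [hf1.tsum_eq] at h

private lemma auxQ_nonneg (hα : 0 < α) (hα1 : α < 1) (hf0 : ∀ k, 0 ≤ f k) :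
    ∀ n r, 0 ≤ auxQ α f n r := by
  intro n
  induction n with
  | zero => intro r; by_cases h : r = 0 <;> simp [auxQ, h]
  | succ n ih =>
      intro r
      exact Finset.sum_nonneg fun j _ =>
        mul_nonneg (ih j) (auxP_nonneg hα hα1 hf0 n (r - j))

private lemma auxQ_hasSum (hα : 0 < α) (hα1 : α < 1) (hf0 : ∀ k, 0 ≤ f k) (hf1 : HasSum f 1)
    (n : ℕ) {z : ℝ} (hz0 : 0 ≤ z) (hz1 : z ≤ 1) :
    HasSum (fun r : ℕ => auxQ α f n r * z ^ r)
      (∏ i ∈ Finset.range n, ∑' k : ℕ, f k * (1 - α ^ i + α ^ i * z) ^ k) := by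
  induction n with
  | zero =>
      simp only [Finset.range_zero, Finset.prod_empty]
      have he : (fun r : ℕ => auxQ α f 0 r * z ^ r) = fun r : ℕ => if r = 0 then 1 else 0 := by
        funext r
        by_cases h : r = 0 <;> simp [auxQ, h]
      rw [he]
      exact hasSum_ite_eq 0 1
  | succ n ih =>
      have hP := auxP_hasSum hα hα1 hf0 hf1 n hz0 hz1
      have hQnorm : Summable fun r : ℕ => ‖auxQ α f n r * z ^ r‖ := by
        have : (fun r : ℕ => ‖auxQ α f n r * z ^ r‖) = fun r : ℕ => auxQ α f n r * z ^ r := by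
          funext r
          exact Real.norm_of_nonneg
            (mul_nonneg (auxQ_nonneg hα hα1 hf0 n r) (pow_nonneg hz0 r))
        rw [this]; exact ih.summable
      have hPnorm : Summable fun r : ℕ => ‖auxP α f n r * z ^ r‖ := by
        have : (fun r : ℕ => ‖auxP α f n r * z ^ r‖) = fun r : ℕ => auxP α f n r * z ^ r := by
          funext r
          exact Real.norm_of_nonneg
            (mul_nonneg (auxP_nonneg hα hα1 hf0 n r) (pow_nonneg hz0 r))
        rw [this]; exact hP.summable
      have hmul := hasSum_sum_range_mul_of_summable_norm hQnorm hPnorm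
      rw [ih.tsum_eq, hP.tsum_eq] at hmul
      have he : (fun r : ℕ => ∑ j ∈ Finset.range (r + 1),
            auxQ α f n j * z ^ j * (auxP α f n (r - j) * z ^ (r - j)))
          = fun r : ℕ => auxQ α f (n + 1) r * z ^ r := by
        funext r
        show _ = (∑ j ∈ Finset.range (r + 1), auxQ α f n j * auxP α f n (r - j)) * z ^ r
        rw [Finset.sum_mul]
        refine Finset.sum_congr rfl fun j hj => ?_
        have hjr : j + (r - j) = r :=
          Nat.add_sub_cancel' (Nat.lt_succ_iff.mp (Finset.mem_range.mp hj))
        calc auxQ α f n j * z ^ j * (auxP α f n (r - j) * z ^ (r - j))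
            = auxQ α f n j * auxP α f n (r - j) * (z ^ j * z ^ (r - j)) := by ring
          _ = auxQ α f n j * auxP α f n (r - j) * z ^ r := by rw [← pow_add, hjr]
      rw [he] at hmul
      rw [Finset.prod_range_succ]
      exact hmul

private lemma auxQ_pmf (hα : 0 < α) (hα1 : α < 1) (hf0 : ∀ k, 0 ≤ f k) (hf1 : HasSum f 1)
    (n : ℕ) : HasSum (auxQ α f n) 1 := by
  have h := auxQ_hasSum hα hα1 hf0 hf1 n (z := 1) zero_le_one le_rfl
  have e : (∏ i ∈ Finset.range n, ∑' k : ℕ, f k * (1 - α ^ i + α ^ i * (1:ℝ)) ^ k) = 1 :=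
    Finset.prod_eq_one fun i _ => by
      rw [show (1:ℝ) - α ^ i + α ^ i * 1 = 1 by ring]
      simp only [one_pow, mul_one]
      exact hf1.tsum_eq
  rw [e] at h
  simpa only [one_pow, mul_one] using h

/-- `u_i(z) = 1 - α^i + α^i z ∈ [0,1]`. -/
private lemma aux_u_mem (hα : 0 < α) (hα1 : α < 1) (i : ℕ) {z : ℝ} (hz0 : 0 ≤ z) (hz1 : z ≤ 1) :
    0 ≤ 1 - α ^ i + α ^ i * z ∧ 1 - α ^ i + α ^ i * z ≤ 1 := by
  have h1 : α ^ i ≤ 1 := pow_le_one₀ hα.le hα1.le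
  have h2 : 0 < α ^ i := pow_pos hα i
  constructor <;> nlinarith

/-- `1 - Ψ(1 - α^n) ≤ m α^n`. -/
private lemma auxP_zero_lb (hα : 0 < α) (hα1 : α < 1) (hf0 : ∀ k, 0 ≤ f k) (hf1 : HasSum f 1)
    (hmean : Summable fun k : ℕ => (k : ℝ) * f k) (n : ℕ) :
    1 - auxP α f n 0 ≤ (∑' k : ℕ, (k : ℝ) * f k) * α ^ n := by
  have h1 : α ^ n ≤ 1 := pow_le_one₀ hα.le hα1.le
  have h2 : 0 < α ^ n := pow_pos hα n
  have he : auxP α f n 0 = ∑' k : ℕ, f k * (1 - α ^ n) ^ k := by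
    refine tsum_congr fun k => ?_
    simp
  rw [he]
  have := aux_Phi_lip hf0 hf1 hmean (u := 1 - α ^ n) (by linarith) (by linarith)
  calc 1 - ∑' k : ℕ, f k * (1 - α ^ n) ^ k
      ≤ (∑' k : ℕ, (k : ℝ) * f k) * (1 - (1 - α ^ n)) := this
    _ = (∑' k : ℕ, (k : ℝ) * f k) * α ^ n := by ring_nf

/-- difference bound for successive `auxQ`. -/
private lemma auxQ_diff (hα : 0 < α) (hα1 : α < 1) (hf0 : ∀ k, 0 ≤ f k) (hf1 : HasSum f 1)
    (n r : ℕ) :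
    |auxQ α f (n + 1) r - auxQ α f n r| ≤ 1 - auxP α f n 0 := by
  have hpmf := auxP_pmf hα hα1 hf0 hf1 n
  have hQpmf := auxQ_pmf hα hα1 hf0 hf1 n
  have hp0 : 0 ≤ auxP α f n 0 := auxP_nonneg hα hα1 hf0 n 0
  have hp1 : auxP α f n 0 ≤ 1 := by
    have := sum_le_hasSum {0} (fun i _ => auxP_nonneg hα hα1 hf0 n i) hpmf
    simpa using this
  have hPle : ∀ s : ℕ, s ≠ 0 → auxP α f n s ≤ 1 - auxP α f n 0 := by
    intro s hs
    have := sum_le_hasSum {0, s} (fun i _ => auxP_nonneg hα hα1 hf0 n i) hpmf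
    rw [Finset.sum_pair (Ne.symm hs)] at this
    linarith
  have hQ1 : auxQ α f n r ≤ 1 := by
    have := sum_le_hasSum {r} (fun i _ => auxQ_nonneg hα hα1 hf0 n i) hQpmf
    simpa using this
  have hsplit : auxQ α f (n + 1) r
      = (∑ j ∈ Finset.range r, auxQ α f n j * auxP α f n (r - j))
        + auxQ α f n r * auxP α f n 0 := by
    show (∑ j ∈ Finset.range (r + 1), auxQ α f n j * auxP α f n (r - j)) = _
    rw [Finset.sum_range_succ, Nat.sub_self]
  set S := ∑ j ∈ Finset.range r, auxQ α f n j * auxP α f n (r - j) with hSdef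
  have hS0 : 0 ≤ S :=
    Finset.sum_nonneg fun j _ =>
      mul_nonneg (auxQ_nonneg hα hα1 hf0 n j) (auxP_nonneg hα hα1 hf0 n (r - j))
  have hS1 : S ≤ 1 - auxP α f n 0 := by
    have hstep : S ≤ ∑ j ∈ Finset.range r, auxQ α f n j * (1 - auxP α f n 0) := by
      refine Finset.sum_le_sum fun j hj => ?_
      have hj' : j < r := Finset.mem_range.mp hj
      have : r - j ≠ 0 := by omega
      exact mul_le_mul_of_nonneg_left (hPle _ this) (auxQ_nonneg hα hα1 hf0 n j)
    have hsum : ∑ j ∈ Finset.range r, auxQ α f n j ≤ 1 :=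
      sum_le_hasSum _ (fun i _ => auxQ_nonneg hα hα1 hf0 n i) hQpmf
    have : ∑ j ∈ Finset.range r, auxQ α f n j * (1 - auxP α f n 0)
        = (∑ j ∈ Finset.range r, auxQ α f n j) * (1 - auxP α f n 0) :=
      (Finset.sum_mul _ _ _).symm
    rw [this] at hstep
    nlinarith
  have hQr0 : 0 ≤ auxQ α f n r := auxQ_nonneg hα hα1 hf0 n r
  rw [abs_le]
  constructor <;> rw [hsplit] <;> nlinarith

/-- Lower bound on the partial product. -/
private lemma aux_prod_lb (hα : 0 < α) (hα1 : α < 1) (hf0 : ∀ k, 0 ≤ f k) (hf1 : HasSum f 1)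
    (hmean : Summable fun k : ℕ => (k : ℝ) * f k) (n : ℕ) {z : ℝ} (hz0 : 0 ≤ z) (hz1 : z ≤ 1) :
    1 - (∑' k : ℕ, (k : ℝ) * f k) * (1 - z) * (1 - α)⁻¹
      ≤ ∏ i ∈ Finset.range n, ∑' k : ℕ, f k * (1 - α ^ i + α ^ i * z) ^ k := by
  set m := ∑' k : ℕ, (k : ℝ) * f k with hm
  have hm0 : 0 ≤ m := tsum_nonneg fun k => mul_nonneg (Nat.cast_nonneg k) (hf0 k)
  set g : ℕ → ℝ := fun i => ∑' k : ℕ, f k * (1 - α ^ i + α ^ i * z) ^ k with hg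
  have hu : ∀ i : ℕ, 0 ≤ 1 - α ^ i + α ^ i * z ∧ 1 - α ^ i + α ^ i * z ≤ 1 :=
    fun i => aux_u_mem hα hα1 i hz0 hz1
  have hg0 : ∀ i, 0 ≤ g i := fun i => aux_Phi_nonneg hf0 (hu i).1
  have hg1 : ∀ i, g i ≤ 1 := fun i => aux_Phi_le_one hf0 hf1 (hu i).1 (hu i).2
  have hweier := aux_weier g hg0 hg1 n
  have hsum_bound : ∑ i ∈ Finset.range n, (1 - g i) ≤ m * (1 - z) * (1 - α)⁻¹ := by
    have hterm : ∀ i ∈ Finset.range n, 1 - g i ≤ m * (1 - z) * α ^ i := by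
      intro i _
      have := aux_Phi_lip hf0 hf1 hmean (hu i).1 (hu i).2
      have he : 1 - (1 - α ^ i + α ^ i * z) = α ^ i * (1 - z) := by ring
      rw [he] at this
      calc 1 - g i ≤ m * (α ^ i * (1 - z)) := this
        _ = m * (1 - z) * α ^ i := by ring
    calc ∑ i ∈ Finset.range n, (1 - g i) ≤ ∑ i ∈ Finset.range n, m * (1 - z) * α ^ i :=
          Finset.sum_le_sum hterm
      _ = m * (1 - z) * ∑ i ∈ Finset.range n, α ^ i := by rw [Finset.mul_sum]
      _ ≤ m * (1 - z) * (1 - α)⁻¹ := by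
          have hgeo : ∑ i ∈ Finset.range n, α ^ i ≤ (1 - α)⁻¹ := by
            have h1 := Summable.sum_le_tsum (Finset.range n)
              (fun i _ => by positivity) (summable_geometric_of_lt_one hα.le hα1)
            rwa [tsum_geometric_of_lt_one hα.le hα1] at h1
          have : 0 ≤ m * (1 - z) := mul_nonneg hm0 (by linarith)
          exact mul_le_mul_of_nonneg_left hgeo this
  linarith

private lemma auxQ_tail (hα : 0 < α) (hα1 : α < 1) (hf0 : ∀ k, 0 ≤ f k) (hf1 : HasSum f 1)
    (hmean : Summable fun k : ℕ => (k : ℝ) * f k) (n R : ℕ) :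
    ∑' r : ↑(↑(Finset.range (R + 1)) : Set ℕ)ᶜ, auxQ α f n ↑r
      ≤ 2 * (∑' k : ℕ, (k : ℝ) * f k) * (1 - α)⁻¹ * ((R : ℝ) + 1)⁻¹ := by
  set m := ∑' k : ℕ, (k : ℝ) * f k with hm
  have hm0 : 0 ≤ m := tsum_nonneg fun k => mul_nonneg (Nat.cast_nonneg k) (hf0 k)
  have hRpos : (0:ℝ) < (R : ℝ) + 1 := by positivity
  have hinv0 : (0:ℝ) ≤ ((R : ℝ) + 1)⁻¹ := by positivity
  have hinv1 : ((R : ℝ) + 1)⁻¹ ≤ 1 := by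
    have h := inv_anti₀ (by norm_num : (0:ℝ) < 1)
      (by linarith [Nat.cast_nonneg (α := ℝ) R] : (1:ℝ) ≤ (R : ℝ) + 1)
    simpa using h
  set z : ℝ := 1 - ((R : ℝ) + 1)⁻¹ with hzdef
  have hz0 : 0 ≤ z := by simp only [hzdef]; linarith
  have hz1 : z ≤ 1 := by simp only [hzdef]; linarith
  have hhalf : ∀ r : ℕ, R + 1 ≤ r → z ^ r ≤ 1 / 2 := by
    intro r hr
    have h1 : z ^ r ≤ z ^ (R + 1) := pow_le_pow_of_le_one hz0 hz1 hr
    have h2 : z ≤ Real.exp (-((R : ℝ) + 1)⁻¹) := by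
      have := Real.add_one_le_exp (-((R : ℝ) + 1)⁻¹)
      simp only [hzdef]; linarith
    have h3 : z ^ (R + 1) ≤ Real.exp (-((R : ℝ) + 1)⁻¹) ^ (R + 1) :=
      pow_le_pow_left₀ hz0 h2 (R + 1)
    have h4 : Real.exp (-((R : ℝ) + 1)⁻¹) ^ (R + 1) = Real.exp (-1) := by
      rw [← Real.exp_nat_mul]
      congr 1
      have hne : ((R : ℝ) + 1) ≠ 0 := by positivity
      push_cast
      field_simp
    have h5 : Real.exp (-1) ≤ 1 / 2 := by
      rw [Real.exp_neg, show (1:ℝ)/2 = 2⁻¹ by norm_num]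
      exact inv_anti₀ (by norm_num) (by linarith [Real.exp_one_gt_d9])
    linarith
  have hQz := auxQ_hasSum hα hα1 hf0 hf1 n hz0 hz1
  have hQ1 := auxQ_pmf hα hα1 hf0 hf1 n
  have hdiff : HasSum (fun r : ℕ => auxQ α f n r - auxQ α f n r * z ^ r)
      (1 - ∏ i ∈ Finset.range n, ∑' k : ℕ, f k * (1 - α ^ i + α ^ i * z) ^ k) := hQ1.sub hQz
  have hdiff0 : ∀ r : ℕ, 0 ≤ auxQ α f n r - auxQ α f n r * z ^ r := by
    intro r
    have h1 : z ^ r ≤ 1 := pow_le_one₀ hz0 hz1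
    nlinarith [auxQ_nonneg hα hα1 hf0 n r, pow_nonneg hz0 r]
  have hsub1 : Summable fun r : ↑(↑(Finset.range (R + 1)) : Set ℕ)ᶜ => auxQ α f n ↑r :=
    hQ1.summable.subtype _
  have hsub2 : Summable fun r : ↑(↑(Finset.range (R + 1)) : Set ℕ)ᶜ =>
      auxQ α f n ↑r - auxQ α f n ↑r * z ^ (↑r : ℕ) := hdiff.summable.subtype _
  have hpt : ∀ r : ↑(↑(Finset.range (R + 1)) : Set ℕ)ᶜ,
      auxQ α f n ↑r ≤ 2 * (auxQ α f n ↑r - auxQ α f n ↑r * z ^ (↑r : ℕ)) := by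
    rintro ⟨r, hr⟩
    have hr' : R + 1 ≤ r := by
      simp only [Set.mem_compl_iff, Finset.coe_range, Set.mem_Iio, not_lt] at hr
      exact hr
    have := hhalf r hr'
    have hQ0 := auxQ_nonneg hα hα1 hf0 n r
    simp only
    nlinarith [pow_nonneg hz0 r]
  have htail_le : ∑' r : ↑(↑(Finset.range (R + 1)) : Set ℕ)ᶜ,
      (auxQ α f n ↑r - auxQ α f n ↑r * z ^ (↑r : ℕ))
      ≤ 1 - ∏ i ∈ Finset.range n, ∑' k : ℕ, f k * (1 - α ^ i + α ^ i * z) ^ k := by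
    have hsplit := Summable.sum_add_tsum_compl (s := Finset.range (R + 1)) hdiff.summable
    rw [hdiff.tsum_eq] at hsplit
    have hfin : 0 ≤ ∑ r ∈ Finset.range (R + 1), (auxQ α f n r - auxQ α f n r * z ^ r) :=
      Finset.sum_nonneg fun r _ => hdiff0 r
    linarith
  have hPn := aux_prod_lb hα hα1 hf0 hf1 hmean n hz0 hz1
  calc ∑' r : ↑(↑(Finset.range (R + 1)) : Set ℕ)ᶜ, auxQ α f n ↑r
      ≤ ∑' r : ↑(↑(Finset.range (R + 1)) : Set ℕ)ᶜ,
          2 * (auxQ α f n ↑r - auxQ α f n ↑r * z ^ (↑r : ℕ)) :=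
        Summable.tsum_le_tsum hpt hsub1 (hsub2.mul_left 2)
    _ = 2 * ∑' r : ↑(↑(Finset.range (R + 1)) : Set ℕ)ᶜ,
          (auxQ α f n ↑r - auxQ α f n ↑r * z ^ (↑r : ℕ)) := tsum_mul_left
    _ ≤ 2 * (m * (1 - z) * (1 - α)⁻¹) := by
        have h1 : 1 - ∏ i ∈ Finset.range n, ∑' k : ℕ, f k * (1 - α ^ i + α ^ i * z) ^ k
            ≤ m * (1 - z) * (1 - α)⁻¹ := by linarith
        linarith [htail_le]
    _ = 2 * m * (1 - α)⁻¹ * ((R : ℝ) + 1)⁻¹ := by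
        simp only [hzdef]; ring

end Aux

/-- Let `α ∈ (0,1)` and let `f` be a pmf on `ℕ` with finite mean, with pgf `Ψ`.
Then `φ(z) = ∏_{i=0}^∞ Ψ(1 − α^i + α^i z)` is itself a pgf: there exists a pmf `p` on `ℕ`
such that `φ(z) = ∑_{r=0}^∞ p(r)·z^r` for every `z ∈ [0,1]`. -/
theorem stmt_1 (α : ℝ) (hα : α ∈ Set.Ioo (0 : ℝ) 1)
    (f : ℕ → ℝ) (hf0 : ∀ k, 0 ≤ f k) (hf1 : HasSum f 1)
    (hmean : Summable fun k : ℕ => (k : ℝ) * f k)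
    (Ψ : ℝ → ℝ) (hΨ : ∀ z, Ψ z = ∑' k : ℕ, f k * z ^ k) :
    ∃ p : ℕ → ℝ, (∀ r, 0 ≤ p r) ∧ HasSum p 1 ∧
      ∀ z ∈ Set.Icc (0 : ℝ) 1,
        HasSum (fun r : ℕ => p r * z ^ r) (∏' i : ℕ, Ψ (1 - α ^ i + α ^ i * z)) := by
  obtain ⟨hα0, hα1⟩ := hα
  have hm0 : 0 ≤ ∑' k : ℕ, (k : ℝ) * f k :=
    tsum_nonneg fun k => mul_nonneg (Nat.cast_nonneg k) (hf0 k)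
  set m : ℝ := ∑' k : ℕ, (k : ℝ) * f k with hm
  have h1α : 0 < 1 - α := by linarith
  have hinvα : 0 ≤ (1 - α)⁻¹ := by positivity
  -- the differences
  set d : ℕ → ℕ → ℝ := fun r n => auxQ α f (n + 1) r - auxQ α f n r with hd
  have hdbound : ∀ r n, |d r n| ≤ m * α ^ n := fun r n =>
    (auxQ_diff hα0 hα1 hf0 hf1 n r).trans (by linarith [auxP_zero_lb hα0 hα1 hf0 hf1 hmean n])
  have hgeo : Summable fun n : ℕ => m * α ^ n :=
    (summable_geometric_of_lt_one hα0.le hα1).mul_left m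
  have hdsum : ∀ r, Summable fun n => d r n := by
    intro r
    refine Summable.of_abs (hgeo.of_nonneg_of_le (fun n => abs_nonneg _) (fun n => hdbound r n))
  -- the limit pmf
  set p : ℕ → ℝ := fun r => auxQ α f 0 r + ∑' n, d r n with hp
  have htendsto : ∀ r, Tendsto (fun n => auxQ α f n r) atTop (𝓝 (p r)) := by
    intro r
    have h1 := (hdsum r).hasSum.tendsto_sum_nat
    have h2 : ∀ N, ∑ n ∈ Finset.range N, d r n = auxQ α f N r - auxQ α f 0 r := fun N =>
      Finset.sum_range_sub (fun n => auxQ α f n r) N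
    simp only [h2] at h1
    have h3 := h1.add_const (auxQ α f 0 r)
    simp only [sub_add_cancel] at h3
    have h4 : (∑' n, d r n) + auxQ α f 0 r = p r := by rw [hp]; ring
    rwa [h4] at h3
  have hp0 : ∀ r, 0 ≤ p r := fun r =>
    ge_of_tendsto (htendsto r) (Eventually.of_forall fun n => auxQ_nonneg hα0 hα1 hf0 n r)
  -- error bound
  have herr : ∀ N r, |p r - auxQ α f N r| ≤ m * α ^ N * (1 - α)⁻¹ := by
    intro N r
    have hs := hdsum r
    have h1 := Summable.sum_add_tsum_nat_add (f := fun n => d r n) N hs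
    have h2 : ∑ n ∈ Finset.range N, d r n = auxQ α f N r - auxQ α f 0 r :=
      Finset.sum_range_sub (fun n => auxQ α f n r) N
    have h3 : p r - auxQ α f N r = ∑' n, d r (n + N) := by
      have hpr : p r = auxQ α f 0 r + ∑' n, d r n := rfl
      rw [h2] at h1
      rw [hpr]
      linarith
    rw [h3]
    set B : ℕ → ℝ := fun n => m * α ^ N * α ^ n with hB
    have hBsum : Summable B := (summable_geometric_of_lt_one hα0.le hα1).mul_left _
    have hbd : ∀ n, |d r (n + N)| ≤ B n := by
      intro n
      calc |d r (n + N)| ≤ m * α ^ (n + N) := hdbound r (n + N)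
        _ = B n := by rw [hB]; simp only [pow_add]; ring
    have habs : Summable fun n => |d r (n + N)| :=
      hBsum.of_nonneg_of_le (fun n => abs_nonneg _) hbd
    calc |∑' n, d r (n + N)| ≤ ∑' n, |d r (n + N)| := by
          have := norm_tsum_le_tsum_norm (f := fun n => d r (n + N)) (by simpa using habs)
          simpa using this
      _ ≤ ∑' n, B n := Summable.tsum_le_tsum hbd habs hBsum
      _ = m * α ^ N * ∑' n, α ^ n := tsum_mul_left
      _ = m * α ^ N * (1 - α)⁻¹ := by rw [tsum_geometric_of_lt_one hα0.le hα1]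
  -- p is a pmf
  have hQfinsum_le : ∀ (F : Finset ℕ) (n : ℕ), ∑ r ∈ F, auxQ α f n r ≤ 1 := fun F n =>
    sum_le_hasSum F (fun i _ => auxQ_nonneg hα0 hα1 hf0 n i) (auxQ_pmf hα0 hα1 hf0 hf1 n)
  have hpsum_le : ∀ F : Finset ℕ, ∑ r ∈ F, p r ≤ 1 := by
    intro F
    have ht : Tendsto (fun n => ∑ r ∈ F, auxQ α f n r) atTop (𝓝 (∑ r ∈ F, p r)) :=
      tendsto_finset_sum F fun r _ => htendsto r
    exact le_of_tendsto ht (Eventually.of_forall fun n => hQfinsum_le F n)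
  have hpsummable : Summable p := summable_of_sum_le (fun r => hp0 r) hpsum_le
  set C : ℝ := 2 * m * (1 - α)⁻¹ with hC
  have hC0 : 0 ≤ C := by positivity
  have hQfin_lb : ∀ n R : ℕ, 1 - C * ((R : ℝ) + 1)⁻¹ ≤ ∑ r ∈ Finset.range (R + 1), auxQ α f n r := by
    intro n R
    have hsplit := Summable.sum_add_tsum_compl (s := Finset.range (R + 1)) (auxQ_pmf hα0 hα1 hf0 hf1 n).summable
    rw [(auxQ_pmf hα0 hα1 hf0 hf1 n).tsum_eq] at hsplit
    have htail := auxQ_tail hα0 hα1 hf0 hf1 hmean n R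
    rw [← hm] at htail
    have he : 2 * m * (1 - α)⁻¹ * ((R : ℝ) + 1)⁻¹ = C * ((R : ℝ) + 1)⁻¹ := by rw [hC]
    rw [he] at htail
    linarith
  have hpfin_lb : ∀ R : ℕ, 1 - C * ((R : ℝ) + 1)⁻¹ ≤ ∑ r ∈ Finset.range (R + 1), p r := by
    intro R
    have ht : Tendsto (fun n => ∑ r ∈ Finset.range (R + 1), auxQ α f n r) atTop
        (𝓝 (∑ r ∈ Finset.range (R + 1), p r)) :=
      tendsto_finset_sum _ fun r _ => htendsto r
    exact ge_of_tendsto ht (Eventually.of_forall fun n => hQfin_lb n R)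
  have hinv_tend : Tendsto (fun R : ℕ => ((R : ℝ) + 1)⁻¹) atTop (𝓝 0) := by
    have := tendsto_one_div_add_atTop_nhds_zero_nat (𝕜 := ℝ)
    simpa [one_div] using this
  have hptsum_ge : 1 ≤ ∑' r, p r := by
    have hlim : Tendsto (fun R : ℕ => 1 - C * ((R : ℝ) + 1)⁻¹) atTop (𝓝 1) := by
      have h2 := (hinv_tend.const_mul C)
      have h3 := (tendsto_const_nhds (x := (1:ℝ)) (f := atTop (α := ℕ))).sub h2
      simpa using h3
    refine le_of_tendsto hlim (Eventually.of_forall fun R => ?_)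
    calc 1 - C * ((R : ℝ) + 1)⁻¹ ≤ ∑ r ∈ Finset.range (R + 1), p r := hpfin_lb R
      _ ≤ ∑' r, p r := Summable.sum_le_tsum _ (fun i _ => hp0 i) hpsummable
  have hptsum_le : ∑' r, p r ≤ 1 := Summable.tsum_le_of_sum_le hpsummable hpsum_le
  have hpsum1 : HasSum p 1 := hpsummable.hasSum_iff.mpr (le_antisymm hptsum_le hptsum_ge)
  -- tail bound for p
  have hptail : ∀ R : ℕ, ∑' r : ↑(↑(Finset.range (R + 1)) : Set ℕ)ᶜ, p ↑r ≤ C * ((R : ℝ) + 1)⁻¹ := by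
    intro R
    have hsplit := Summable.sum_add_tsum_compl (s := Finset.range (R + 1)) hpsummable
    rw [hpsum1.tsum_eq] at hsplit
    linarith [hpfin_lb R]
  refine ⟨p, hp0, hpsum1, ?_⟩
  intro z hz
  obtain ⟨hz0, hz1⟩ := hz
  simp only [hΨ]
  by_cases hz_eq : z = 1
  · subst hz_eq
    have hone : ∀ i : ℕ, (∑' k : ℕ, f k * (1 - α ^ i + α ^ i * (1:ℝ)) ^ k) = 1 := by
      intro i
      rw [show (1:ℝ) - α ^ i + α ^ i * 1 = 1 by ring]
      simp only [one_pow, mul_one]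
      exact hf1.tsum_eq
    rw [tprod_congr hone, tprod_one]
    simpa using hpsum1
  · set g : ℕ → ℝ := fun i => ∑' k : ℕ, f k * (1 - α ^ i + α ^ i * z) ^ k with hg
    have hu : ∀ i : ℕ, 0 ≤ 1 - α ^ i + α ^ i * z ∧ 1 - α ^ i + α ^ i * z ≤ 1 :=
      fun i => aux_u_mem hα0 hα1 i hz0 hz1
    have hg0 : ∀ i, 0 ≤ g i := fun i => aux_Phi_nonneg hf0 (hu i).1
    have hg1 : ∀ i, g i ≤ 1 := fun i => aux_Phi_le_one hf0 hf1 (hu i).1 (hu i).2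
    have hanti : Antitone fun s : Finset ℕ => ∏ i ∈ s, g i := by
      intro s t hst
      show ∏ i ∈ t, g i ≤ ∏ i ∈ s, g i
      rw [← Finset.prod_sdiff hst]
      have h1 : ∏ i ∈ t \ s, g i ≤ 1 :=
        Finset.prod_le_one (fun i _ => hg0 i) (fun i _ => hg1 i)
      have h2 : 0 ≤ ∏ i ∈ s, g i := Finset.prod_nonneg fun i _ => hg0 i
      nlinarith [Finset.prod_nonneg (fun i (_ : i ∈ t \ s) => hg0 i)]
    have hbdd : BddBelow (Set.range fun s : Finset ℕ => ∏ i ∈ s, g i) := by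
      refine ⟨0, ?_⟩
      rintro x ⟨s, rfl⟩
      exact Finset.prod_nonneg fun i _ => hg0 i
    have hprod : HasProd g (⨅ s : Finset ℕ, ∏ i ∈ s, g i) := tendsto_atTop_ciInf hanti hbdd
    have hrange : Tendsto (fun n => ∏ i ∈ Finset.range n, g i) atTop
        (𝓝 (⨅ s : Finset ℕ, ∏ i ∈ s, g i)) := hprod.tendsto_prod_nat
    have hsummable_pz : Summable fun r : ℕ => p r * z ^ r :=
      hpsummable.of_nonneg_of_le
        (fun r => mul_nonneg (hp0 r) (pow_nonneg hz0 r))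
        (fun r => by nlinarith [hp0 r, pow_le_one₀ hz0 hz1 (n := r), pow_nonneg hz0 r])
    set Fz : ℝ := ∑' r, p r * z ^ r with hFz
    have hQz : ∀ n : ℕ, HasSum (fun r : ℕ => auxQ α f n r * z ^ r) (∏ i ∈ Finset.range n, g i) :=
      fun n => auxQ_hasSum hα0 hα1 hf0 hf1 n hz0 hz1
    -- quantitative estimate
    have hest : ∀ n R : ℕ, |(∏ i ∈ Finset.range n, g i) - Fz|
        ≤ ((R : ℝ) + 1) * (m * α ^ n * (1 - α)⁻¹) + 2 * (C * ((R : ℝ) + 1)⁻¹) := by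
      intro n R
      have hA : |(∏ i ∈ Finset.range n, g i) - ∑ r ∈ Finset.range (R + 1), auxQ α f n r * z ^ r|
          ≤ C * ((R : ℝ) + 1)⁻¹ := by
        have hsplit := Summable.sum_add_tsum_compl (s := Finset.range (R + 1)) (hQz n).summable
        rw [(hQz n).tsum_eq] at hsplit
        have hQsub : Summable fun r : ↑(↑(Finset.range (R + 1)) : Set ℕ)ᶜ => auxQ α f n ↑r :=
          (auxQ_pmf hα0 hα1 hf0 hf1 n).summable.subtype _
        have hQzsub : Summable fun r : ↑(↑(Finset.range (R + 1)) : Set ℕ)ᶜ =>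
            auxQ α f n ↑r * z ^ (↑r : ℕ) := (hQz n).summable.subtype _
        have htz_le : ∑' r : ↑(↑(Finset.range (R + 1)) : Set ℕ)ᶜ, auxQ α f n ↑r * z ^ (↑r : ℕ)
            ≤ ∑' r : ↑(↑(Finset.range (R + 1)) : Set ℕ)ᶜ, auxQ α f n ↑r := by
          refine Summable.tsum_le_tsum (fun r => ?_) hQzsub hQsub
          nlinarith [auxQ_nonneg hα0 hα1 hf0 n ↑r, pow_le_one₀ hz0 hz1 (n := (↑r : ℕ)),
            pow_nonneg hz0 (↑r : ℕ)]
        have htz_0 : 0 ≤ ∑' r : ↑(↑(Finset.range (R + 1)) : Set ℕ)ᶜ, auxQ α f n ↑r * z ^ (↑r : ℕ) :=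
          tsum_nonneg fun r => mul_nonneg (auxQ_nonneg hα0 hα1 hf0 n ↑r) (pow_nonneg hz0 _)
        have htail := auxQ_tail hα0 hα1 hf0 hf1 hmean n R
        rw [← hm] at htail
        have he : 2 * m * (1 - α)⁻¹ * ((R : ℝ) + 1)⁻¹ = C * ((R : ℝ) + 1)⁻¹ := by rw [hC]
        rw [he] at htail
        rw [abs_le]
        constructor <;> linarith
      have hB : |Fz - ∑ r ∈ Finset.range (R + 1), p r * z ^ r| ≤ C * ((R : ℝ) + 1)⁻¹ := by
        have hsplit := Summable.sum_add_tsum_compl (s := Finset.range (R + 1)) hsummable_pz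
        rw [← hFz] at hsplit
        have hpsub : Summable fun r : ↑(↑(Finset.range (R + 1)) : Set ℕ)ᶜ => p ↑r :=
          hpsummable.subtype _
        have hpzsub : Summable fun r : ↑(↑(Finset.range (R + 1)) : Set ℕ)ᶜ =>
            p ↑r * z ^ (↑r : ℕ) := hsummable_pz.subtype _
        have htz_le : ∑' r : ↑(↑(Finset.range (R + 1)) : Set ℕ)ᶜ, p ↑r * z ^ (↑r : ℕ)
            ≤ ∑' r : ↑(↑(Finset.range (R + 1)) : Set ℕ)ᶜ, p ↑r := by
          refine Summable.tsum_le_tsum (fun r => ?_) hpzsub hpsub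
          nlinarith [hp0 (↑r : ℕ), pow_le_one₀ hz0 hz1 (n := (↑r : ℕ)), pow_nonneg hz0 (↑r : ℕ)]
        have htz_0 : 0 ≤ ∑' r : ↑(↑(Finset.range (R + 1)) : Set ℕ)ᶜ, p ↑r * z ^ (↑r : ℕ) :=
          tsum_nonneg fun r => mul_nonneg (hp0 ↑r) (pow_nonneg hz0 _)
        have := hptail R
        rw [abs_le]
        constructor <;> linarith
      have hmid : |(∑ r ∈ Finset.range (R + 1), auxQ α f n r * z ^ r)
          - ∑ r ∈ Finset.range (R + 1), p r * z ^ r|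
          ≤ ((R : ℝ) + 1) * (m * α ^ n * (1 - α)⁻¹) := by
        rw [← Finset.sum_sub_distrib]
        calc |∑ r ∈ Finset.range (R + 1), (auxQ α f n r * z ^ r - p r * z ^ r)|
            ≤ ∑ r ∈ Finset.range (R + 1), |auxQ α f n r * z ^ r - p r * z ^ r| :=
              Finset.abs_sum_le_sum_abs _ _
          _ ≤ ∑ _r ∈ Finset.range (R + 1), m * α ^ n * (1 - α)⁻¹ := by
              refine Finset.sum_le_sum fun r _ => ?_
              have h1 : auxQ α f n r * z ^ r - p r * z ^ r = (auxQ α f n r - p r) * z ^ r := by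
                ring
              rw [h1, abs_mul]
              have h2 : |z ^ r| ≤ 1 := by
                rw [abs_of_nonneg (pow_nonneg hz0 r)]
                exact pow_le_one₀ hz0 hz1
              have h3 : |auxQ α f n r - p r| ≤ m * α ^ n * (1 - α)⁻¹ := by
                rw [abs_sub_comm]
                exact herr n r
              calc |auxQ α f n r - p r| * |z ^ r| ≤ |auxQ α f n r - p r| * 1 :=
                    mul_le_mul_of_nonneg_left h2 (abs_nonneg _)
                _ ≤ m * α ^ n * (1 - α)⁻¹ := by rw [mul_one]; exact h3
          _ = ((R : ℝ) + 1) * (m * α ^ n * (1 - α)⁻¹) := by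
              rw [Finset.sum_const, Finset.card_range]
              push_cast
              ring
      calc |(∏ i ∈ Finset.range n, g i) - Fz|
          ≤ |(∏ i ∈ Finset.range n, g i) - ∑ r ∈ Finset.range (R + 1), auxQ α f n r * z ^ r|
            + |(∑ r ∈ Finset.range (R + 1), auxQ α f n r * z ^ r) - Fz| := abs_sub_le _ _ _
        _ ≤ |(∏ i ∈ Finset.range n, g i) - ∑ r ∈ Finset.range (R + 1), auxQ α f n r * z ^ r|
            + (|(∑ r ∈ Finset.range (R + 1), auxQ α f n r * z ^ r)
                - ∑ r ∈ Finset.range (R + 1), p r * z ^ r|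
              + |(∑ r ∈ Finset.range (R + 1), p r * z ^ r) - Fz|) := by
            have := abs_sub_le (∑ r ∈ Finset.range (R + 1), auxQ α f n r * z ^ r)
              (∑ r ∈ Finset.range (R + 1), p r * z ^ r) Fz
            linarith
        _ ≤ ((R : ℝ) + 1) * (m * α ^ n * (1 - α)⁻¹) + 2 * (C * ((R : ℝ) + 1)⁻¹) := by
            have h4 : |(∑ r ∈ Finset.range (R + 1), p r * z ^ r) - Fz| ≤ C * ((R : ℝ) + 1)⁻¹ := by
              rw [abs_sub_comm]; exact hB
            linarith [hA, hmid]
    -- conclude convergence to Fz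
    have htendsF : Tendsto (fun n => ∏ i ∈ Finset.range n, g i) atTop (𝓝 Fz) := by
      rw [Metric.tendsto_atTop]
      intro ε hε
      obtain ⟨R, hR⟩ : ∃ R : ℕ, 2 * (C * ((R : ℝ) + 1)⁻¹) < ε / 2 := by
        have h2 : Tendsto (fun R : ℕ => 2 * (C * ((R : ℝ) + 1)⁻¹)) atTop (𝓝 0) := by
          have := (hinv_tend.const_mul C).const_mul 2
          simpa using this
        exact ((h2.eventually (gt_mem_nhds (by positivity : (0:ℝ) < ε / 2))).exists)
      have hαtend : Tendsto (fun n : ℕ => ((R : ℝ) + 1) * (m * α ^ n * (1 - α)⁻¹)) atTop (𝓝 0) := by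
        have h1 : Tendsto (fun n : ℕ => α ^ n) atTop (𝓝 0) :=
          tendsto_pow_atTop_nhds_zero_of_lt_one hα0.le hα1
        have h2 := ((h1.const_mul m).mul_const ((1 - α)⁻¹)).const_mul ((R : ℝ) + 1)
        simpa using h2
      obtain ⟨N, hN⟩ := (eventually_atTop).mp
        (hαtend.eventually (gt_mem_nhds (by positivity : (0:ℝ) < ε / 2)))
      refine ⟨N, fun n hn => ?_⟩
      rw [Real.dist_eq]
      calc |(∏ i ∈ Finset.range n, g i) - Fz|
          ≤ ((R : ℝ) + 1) * (m * α ^ n * (1 - α)⁻¹) + 2 * (C * ((R : ℝ) + 1)⁻¹) := hest n R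
        _ < ε / 2 + ε / 2 := by
            have := hN n hn
            linarith
        _ = ε := by ring
    have huniq : Fz = ⨅ s : Finset ℕ, ∏ i ∈ s, g i := tendsto_nhds_unique htendsF hrange
    rw [hprod.tprod_eq, ← huniq]
    exact hsummable_pz.hasSum
end

section
/- Let α ∈ (0,1) and let f be a pmf on ℕ all of whose factorial moments are finite (i.e., ∑_{k=0}^∞ k(k−1)⋯(k−r+1) f(k) < ∞ for every r ≥ 1), with pgf Ψ, and let φ(z) = ∏_{i=0}^∞ Ψ(1 − α^i + α^i z) be the pgf of the pmf p. Then for every r ≥ 1 the r-th factorial cumulant of p is finite and equals κ_[r]^{(p)} = κ_[r]^{(f)} / (1 − α^r), where the r-th factorial cumulant of a pmf with pgf G is the r-th derivative at z = 1 (taken within the interval [0,1]) of the function z ↦ ln G(z). -/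
open Set Filter Topology

lemma hasDerivWithinAt_tsum_convex {s : Set ℝ} (hs : Convex ℝ s)
    {u : ℕ → ℝ} (hu : Summable u)
    {f f' : ℕ → ℝ → ℝ}
    (hf : ∀ n, ∀ x ∈ s, HasDerivWithinAt (f n) (f' n x) s x)
    (hf' : ∀ n, ∀ x ∈ s, ‖f' n x‖ ≤ u n)
    (hsum : ∀ y ∈ s, Summable fun n => f n y)
    {x : ℝ} (hx : x ∈ s) :
    HasDerivWithinAt (fun y => ∑' n, f n y) (∑' n, f' n x) s x := by
  have hu0 : ∀ n, 0 ≤ u n := fun n => le_trans (norm_nonneg _) (hf' n x hx)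
  have hsum' : ∀ y ∈ s, Summable fun n => f' n y :=
    fun y hy => Summable.of_norm_bounded hu (fun n => hf' n y hy)
  rw [hasDerivWithinAt_iff_isLittleO]
  rw [Asymptotics.isLittleO_iff]
  intro c hc
  -- choose N with tail sum < c/3
  obtain ⟨N, hN⟩ : ∃ N : ℕ, ∑' n, u (n + N) < c / 3 := by
    have := tendsto_sum_nat_add u
    exact ((tendsto_order.1 this).2 _ (by linarith)).exists
  have htail_nonneg : (0:ℝ) ≤ ∑' n, u (n + N) := tsum_nonneg fun n => hu0 _
  -- head function
  set g : ℝ → ℝ := fun y => ∑ n ∈ Finset.range N, f n y with hg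
  have hgd : HasDerivWithinAt g (∑ n ∈ Finset.range N, f' n x) s x :=
    HasDerivWithinAt.fun_sum (fun n _ => hf n x hx)
  have hgo := (hasDerivWithinAt_iff_isLittleO.1 hgd)
  have hhead : ∀ᶠ y in 𝓝[s] x, ‖g y - g x - (y - x) • (∑ n ∈ Finset.range N, f' n x)‖ ≤ c / 3 * ‖y - x‖ :=
    Asymptotics.isLittleO_iff.1 hgo (by linarith)
  filter_upwards [hhead, self_mem_nhdsWithin] with y hy hys
  -- split sums
  have hfy := hsum y hys
  have hfx := hsum x hx
  have hf'x := hsum' x hx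
  have e1 : (∑' n, f n y) = g y + ∑' n, f (n + N) y := (Summable.sum_add_tsum_nat_add N hfy).symm
  have e2 : (∑' n, f n x) = g x + ∑' n, f (n + N) x := (Summable.sum_add_tsum_nat_add N hfx).symm
  have e3 : (∑' n, f' n x) = (∑ n ∈ Finset.range N, f' n x) + ∑' n, f' (n + N) x :=
    (Summable.sum_add_tsum_nat_add N hf'x).symm
  have hmvt : ∀ n : ℕ, ‖f (n + N) y - f (n + N) x‖ ≤ u (n + N) * ‖y - x‖ := fun n =>
    hs.norm_image_sub_le_of_norm_hasDerivWithin_le (hf (n + N)) (fun z hz => hf' (n + N) z hz) hx hys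
  have hsub : Summable fun n => f (n + N) y - f (n + N) x :=
    (((summable_nat_add_iff N).2 hfy).sub ((summable_nat_add_iff N).2 hfx))
  have htaily : ‖(∑' n, f (n + N) y) - ∑' n, f (n + N) x‖ ≤ (∑' n, u (n + N)) * ‖y - x‖ := by
    rw [← Summable.tsum_sub ((summable_nat_add_iff N).2 hfy) ((summable_nat_add_iff N).2 hfx)]
    calc ‖∑' n, (f (n + N) y - f (n + N) x)‖ ≤ ∑' n, ‖f (n + N) y - f (n + N) x‖ := by
          apply norm_tsum_le_tsum_norm
          exact Summable.of_nonneg_of_le (fun n => norm_nonneg _) hmvt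
            (((summable_nat_add_iff N).2 hu).mul_right _)
      _ ≤ ∑' n, u (n + N) * ‖y - x‖ := Summable.tsum_le_tsum hmvt
            (Summable.of_nonneg_of_le (fun n => norm_nonneg _) hmvt
              (((summable_nat_add_iff N).2 hu).mul_right _))
            (((summable_nat_add_iff N).2 hu).mul_right _)
      _ = (∑' n, u (n + N)) * ‖y - x‖ := by rw [tsum_mul_right]
  have htailD : ‖∑' n, f' (n + N) x‖ ≤ ∑' n, u (n + N) := by
    calc ‖∑' n, f' (n + N) x‖ ≤ ∑' n, ‖f' (n + N) x‖ :=
          norm_tsum_le_tsum_norm ((summable_nat_add_iff N).2 hu |>.of_nonneg_of_le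
            (fun n => norm_nonneg _) (fun n => hf' (n + N) x hx) |> (fun h => h))
      _ ≤ ∑' n, u (n + N) := Summable.tsum_le_tsum (fun n => hf' (n + N) x hx)
          (Summable.of_nonneg_of_le (fun n => norm_nonneg _) (fun n => hf' (n + N) x hx)
            ((summable_nat_add_iff N).2 hu))
          ((summable_nat_add_iff N).2 hu)
  calc ‖(∑' n, f n y) - (∑' n, f n x) - (y - x) • (∑' n, f' n x)‖
      = ‖(g y - g x - (y - x) • (∑ n ∈ Finset.range N, f' n x))
          + (((∑' n, f (n + N) y) - ∑' n, f (n + N) x) - (y - x) • (∑' n, f' (n + N) x))‖ := by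
        rw [e1, e2, e3]; congr 1; simp only [smul_eq_mul]; ring
    _ ≤ ‖g y - g x - (y - x) • (∑ n ∈ Finset.range N, f' n x)‖
          + (‖(∑' n, f (n + N) y) - ∑' n, f (n + N) x‖ + ‖y - x‖ * ‖∑' n, f' (n + N) x‖) := by
        refine le_trans (norm_add_le _ _) (add_le_add le_rfl ?_)
        refine le_trans (norm_sub_le _ _) (add_le_add le_rfl ?_)
        rw [norm_smul]
    _ ≤ c / 3 * ‖y - x‖ + ((∑' n, u (n + N)) * ‖y - x‖ + ‖y - x‖ * (∑' n, u (n + N))) := by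
        gcongr
    _ ≤ c * ‖y - x‖ := by nlinarith [norm_nonneg (y - x), hN, htail_nonneg]

lemma tower_contDiffOn {s : Set ℝ} (hs : UniqueDiffOn ℝ s) {F : ℕ → ℝ → ℝ}
    (hd : ∀ j, ∀ z ∈ s, HasDerivWithinAt (F j) (F (j + 1) z) s z) :
    ∀ n j : ℕ, ContDiffOn ℝ n (F j) s := by
  intro n
  induction n with
  | zero =>
    intro j
    have hD : DifferentiableOn ℝ (F j) s := fun z hz => (hd j z hz).differentiableWithinAt
    exact contDiffOn_zero.mpr hD.continuousOn
  | succ n IH =>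
    intro j
    have : ((n + 1 : ℕ) : WithTop ℕ∞) = (n : WithTop ℕ∞) + 1 := by push_cast; ring
    rw [this, contDiffOn_succ_iff_derivWithin hs]
    refine ⟨fun z hz => (hd j z hz).differentiableWithinAt, by simp, ?_⟩
    exact (IH (j + 1)).congr fun z hz =>
      (hd j z hz).derivWithin (hs.uniqueDiffWithinAt hz)

lemma tower_iteratedDerivWithin {s : Set ℝ} (hs : UniqueDiffOn ℝ s) {F : ℕ → ℝ → ℝ}
    (hd : ∀ j, ∀ z ∈ s, HasDerivWithinAt (F j) (F (j + 1) z) s z) :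
    ∀ j, Set.EqOn (iteratedDerivWithin j (F 0) s) (F j) s := by
  intro j
  induction j with
  | zero => intro z _; simp [iteratedDerivWithin_zero]
  | succ j IH =>
    intro z hz
    rw [iteratedDerivWithin_succ, derivWithin_congr IH (IH hz)]
    exact (hd j z hz).derivWithin (hs.uniqueDiffWithinAt hz)

lemma iteratedDerivWithin_inter' {n : ℕ} {f : ℝ → ℝ} {s u : Set ℝ} {x : ℝ} (hu : u ∈ nhds x) :
    iteratedDerivWithin n f (s ∩ u) x = iteratedDerivWithin n f s x := by
  simp only [iteratedDerivWithin_eq_iteratedFDerivWithin, iteratedFDerivWithin_inter hu]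

theorem stmt_5_main (α : ℝ) (hα : α ∈ Set.Ioo (0 : ℝ) 1)
    (f : ℕ → ℝ) (hf0 : ∀ k, 0 ≤ f k) (hf1 : HasSum f 1)
    (hfacmom : ∀ r : ℕ, 1 ≤ r → Summable fun k : ℕ => (k.descFactorial r : ℝ) * f k)
    (Ψ : ℝ → ℝ) (hΨ : ∀ z, Ψ z = ∑' k : ℕ, f k * z ^ k)
    (φ : ℝ → ℝ) (hφ : ∀ z, φ z = ∏' i : ℕ, Ψ (1 - α ^ i + α ^ i * z)) :
    ∀ r : ℕ, 1 ≤ r →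
      iteratedDerivWithin r (fun z => Real.log (φ z)) (Set.Icc 0 1) 1 =
        iteratedDerivWithin r (fun z => Real.log (Ψ z)) (Set.Icc 0 1) 1 / (1 - α ^ r) := by
  obtain ⟨hα0, hα1⟩ := hα
  intro r hr
  have hfs : Summable f := hf1.summable
  have hsum_desc : ∀ j : ℕ, Summable fun k => (k.descFactorial j : ℝ) * f k := by
    intro j
    rcases Nat.eq_zero_or_pos j with h | h
    · simpa [h] using hfs
    · exact hfacmom j h
  set S : Set ℝ := Set.Icc (1 / 2 : ℝ) 1 with hSdef
  have hSu : UniqueDiffOn ℝ S := uniqueDiffOn_Icc (by norm_num)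
  have hSc : Convex ℝ S := convex_Icc _ _
  have h1S : (1 : ℝ) ∈ S := ⟨by norm_num, le_rfl⟩
  have hSsub : S ⊆ Set.Icc 0 1 := Set.Icc_subset_Icc (by norm_num) le_rfl
  -- Ψ as a power series and its derivative tower
  set P : ℕ → ℝ → ℝ := fun j z => ∑' k : ℕ, (k.descFactorial j : ℝ) * f k * z ^ (k - j)
    with hPdef
  have hterm_bound : ∀ (j k : ℕ), ∀ x ∈ S,
      ‖(k.descFactorial j : ℝ) * f k * x ^ (k - j)‖ ≤ (k.descFactorial j : ℝ) * f k := by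
    intro j k x hx
    have hx0 : (0:ℝ) ≤ x := le_trans (by norm_num) hx.1
    have hx1 : x ≤ 1 := hx.2
    have h1 : x ^ (k - j) ≤ 1 := pow_le_one₀ hx0 hx1
    have h2 : (0:ℝ) ≤ x ^ (k - j) := pow_nonneg hx0 _
    have h3 : (0:ℝ) ≤ (k.descFactorial j : ℝ) * f k :=
      mul_nonneg (by positivity) (hf0 k)
    rw [Real.norm_eq_abs, abs_of_nonneg (mul_nonneg h3 h2)]
    nlinarith
  have hPsum : ∀ j : ℕ, ∀ y ∈ S,
      Summable fun k : ℕ => (k.descFactorial j : ℝ) * f k * y ^ (k - j) := by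
    intro j y hy
    exact Summable.of_norm_bounded (hsum_desc j) (fun k => hterm_bound j k y hy)
  have hPder : ∀ j : ℕ, ∀ z ∈ S, HasDerivWithinAt (P j) (P (j + 1) z) S z := by
    intro j z hz
    simp only [hPdef]
    refine hasDerivWithinAt_tsum_convex
      (f := fun k y => (k.descFactorial j : ℝ) * f k * y ^ (k - j))
      (f' := fun k x => (k.descFactorial (j + 1) : ℝ) * f k * x ^ (k - (j + 1)))
      hSc (hsum_desc (j + 1)) ?_ ?_ (hPsum j) hz
    · intro k x hx
      have h0 : HasDerivWithinAt (fun y : ℝ => y ^ (k - j))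
          (((k - j : ℕ) : ℝ) * x ^ (k - j - 1)) S x := (hasDerivAt_pow (k - j) x).hasDerivWithinAt
      have h1 := h0.const_mul ((k.descFactorial j : ℝ) * f k)
      show HasDerivWithinAt (fun y => (k.descFactorial j : ℝ) * f k * y ^ (k - j))
        ((k.descFactorial (j + 1) : ℝ) * f k * x ^ (k - (j + 1))) S x
      refine h1.congr_deriv ?_
      have hd : (k.descFactorial (j + 1) : ℝ) = ((k - j : ℕ) : ℝ) * (k.descFactorial j : ℝ) := by
        rw [Nat.descFactorial_succ]; push_cast; ring
      rw [hd, Nat.sub_sub]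
      ring
    · intro k x hx
      exact hterm_bound (j + 1) k x hx
  have hPcd : ∀ n j : ℕ, ContDiffOn ℝ n (P j) S := tower_contDiffOn hSu hPder
  have hΨP : ∀ z : ℝ, Ψ z = P 0 z := by
    intro z
    rw [hΨ, hPdef]
    simp
  have hΨcd : ∀ n : ℕ, ContDiffOn ℝ n Ψ S :=
    fun n => (hPcd n 0).congr fun z _ => hΨP z
  -- positivity of Ψ on S
  obtain ⟨k0, hk0⟩ : ∃ k, 0 < f k := by
    by_contra h
    push_neg at h
    have h0 : f = fun _ => 0 := funext fun k => le_antisymm (h k) (hf0 k)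
    rw [h0] at hf1
    exact absurd (hf1.unique hasSum_zero) (by norm_num)
  have hsumpow : ∀ z : ℝ, z ∈ Set.Icc (0:ℝ) 1 → Summable fun k : ℕ => f k * z ^ k := by
    intro z hz
    apply Summable.of_norm_bounded hfs
    intro k
    rw [Real.norm_eq_abs, abs_of_nonneg (mul_nonneg (hf0 k) (pow_nonneg hz.1 k))]
    nlinarith [pow_le_one₀ hz.1 hz.2 (n := k), pow_nonneg hz.1 k, hf0 k]
  have hΨpos : ∀ z ∈ S, 0 < Ψ z := by
    intro z hz
    rw [hΨ]
    have hzpos : (0:ℝ) < z := lt_of_lt_of_le (by norm_num) hz.1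
    have h1 : 0 < f k0 * z ^ k0 := mul_pos hk0 (pow_pos hzpos _)
    refine lt_of_lt_of_le h1 (Summable.le_tsum (hsumpow z (hSsub hz)) k0 fun m _ =>
      mul_nonneg (hf0 m) (pow_nonneg hzpos.le m))
  have hΨle1 : ∀ z ∈ Set.Icc (0:ℝ) 1, Ψ z ≤ 1 := by
    intro z hz
    rw [hΨ, ← hf1.tsum_eq]
    refine Summable.tsum_le_tsum (fun k => ?_) (hsumpow z hz) hfs
    nlinarith [pow_le_one₀ hz.1 hz.2 (n := k), pow_nonneg hz.1 k, hf0 k]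
  -- log Ψ
  set L : ℝ → ℝ := fun z => Real.log (Ψ z) with hLdef
  have hLcd : ∀ n : ℕ, ContDiffOn ℝ n L S :=
    fun n => (hΨcd n).log fun z hz => (hΨpos z hz).ne'
  have hC : ∀ j : ℕ, ∃ C : ℝ, 0 ≤ C ∧ ∀ w ∈ S, ‖iteratedDerivWithin j L S w‖ ≤ C := by
    intro j
    have hcont : ContinuousOn (iteratedDerivWithin j L S) S :=
      (hLcd j).continuousOn_iteratedDerivWithin le_rfl hSu
    obtain ⟨C, hCb⟩ := isCompact_Icc.exists_bound_of_continuousOn hcont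
    exact ⟨max C 0, le_max_right _ _, fun w hw => le_trans (hCb w hw) (le_max_left _ _)⟩
  have hLiter : ∀ j : ℕ, ∀ w ∈ S, HasDerivWithinAt (iteratedDerivWithin j L S)
      (iteratedDerivWithin (j + 1) L S w) S w := by
    intro j w hw
    have hdiff : DifferentiableWithinAt ℝ (iteratedDerivWithin j L S) S w := by
      refine (hLcd (j + 1)).differentiableOn_iteratedDerivWithin ?_ hSu w hw
      exact_mod_cast Nat.lt_succ_self j
    rw [iteratedDerivWithin_succ]
    exact hdiff.hasDerivWithinAt
  -- the affine maps
  set a : ℕ → ℝ → ℝ := fun i z => 1 - α ^ i + α ^ i * z with hadef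
  have hαpow : ∀ i : ℕ, 0 < α ^ i := fun i => pow_pos hα0 i
  have hαpow1 : ∀ i : ℕ, α ^ i ≤ 1 := fun i => pow_le_one₀ hα0.le hα1.le
  have haS : ∀ i : ℕ, ∀ z ∈ S, a i z ∈ S := by
    intro i z hz
    simp only [hSdef, Set.mem_Icc] at hz ⊢
    simp only [hadef]
    constructor
    · nlinarith [hαpow i, hαpow1 i, hz.1, hz.2]
    · nlinarith [hαpow i, hz.1, hz.2]
  have ha1 : ∀ i : ℕ, a i 1 = 1 := fun i => by simp [hadef]
  -- chain rule
  have hchain : ∀ j i : ℕ, ∀ z ∈ S,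
      HasDerivWithinAt (fun w => iteratedDerivWithin j L S (a i w))
        (α ^ i * iteratedDerivWithin (j + 1) L S (a i z)) S z := by
    intro j i z hz
    have hinner : HasDerivWithinAt (a i) (α ^ i) S z := by
      have := ((hasDerivWithinAt_id z S).const_mul (α ^ i)).const_add (1 - α ^ i)
      simpa [hadef] using this
    have houter := hLiter j (a i z) (haS i z hz)
    have hcomp := houter.comp z hinner (fun w hw => haS i w hw)
    refine hcomp.congr_deriv ?_
    ring
  -- m1 and level-0 summability
  have hm1s : Summable fun k : ℕ => (k : ℝ) * f k := by
    have := hfacmom 1 le_rfl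
    simpa [Nat.descFactorial_one] using this
  set m1 : ℝ := ∑' k : ℕ, (k : ℝ) * f k with hm1def
  have hm1 : 0 ≤ m1 := tsum_nonneg fun k => mul_nonneg (Nat.cast_nonneg k) (hf0 k)
  have h1mΨ : ∀ w ∈ S, 1 - Ψ w ≤ m1 * (1 - w) := by
    intro w hw
    have hw0 : (0:ℝ) ≤ w := le_trans (by norm_num) hw.1
    have hw1 : w ≤ 1 := hw.2
    have hb : ∀ k : ℕ, f k - f k * w ^ k ≤ (k : ℝ) * f k * (1 - w) := by
      intro k
      have hber : 1 + (k : ℝ) * (w - 1) ≤ w ^ k := by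
        have := one_add_mul_le_pow (a := w - 1) (by nlinarith) k
        simpa using this
      nlinarith [hf0 k]
    have hs1 : Summable fun k : ℕ => f k - f k * w ^ k := hfs.sub (hsumpow w ⟨hw0, hw1⟩)
    have hs2 : Summable fun k : ℕ => (k : ℝ) * f k * (1 - w) := hm1s.mul_right _
    have e : 1 - Ψ w = ∑' k : ℕ, (f k - f k * w ^ k) := by
      rw [hΨ, ← hf1.tsum_eq, ← Summable.tsum_sub hfs (hsumpow w ⟨hw0, hw1⟩)]
    rw [e]
    calc ∑' k : ℕ, (f k - f k * w ^ k) ≤ ∑' k : ℕ, (k : ℝ) * f k * (1 - w) :=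
          Summable.tsum_le_tsum hb hs1 hs2
      _ = m1 * (1 - w) := by rw [tsum_mul_right]
  set ε0 : ℝ := Ψ (1/2) with hε0def
  have hhalfS : (1/2 : ℝ) ∈ S := ⟨le_rfl, by norm_num⟩
  have hε0 : 0 < ε0 := hΨpos _ hhalfS
  have hε0le : ∀ w ∈ S, ε0 ≤ Ψ w := by
    intro w hw
    have hw0 : (0:ℝ) ≤ w := le_trans (by norm_num) hw.1
    rw [hε0def, hΨ, hΨ]
    refine Summable.tsum_le_tsum (fun k => ?_) (hsumpow _ ⟨by norm_num, by norm_num⟩)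
      (hsumpow w ⟨hw0, hw.2⟩)
    have : (1/2 : ℝ) ^ k ≤ w ^ k := pow_le_pow_left₀ (by norm_num) hw.1 k
    nlinarith [hf0 k]
  have hLbound : ∀ w ∈ S, ‖L w‖ ≤ m1 / ε0 * (1 - w) := by
    intro w hw
    have hΨw : 0 < Ψ w := hΨpos w hw
    have hle1 : Ψ w ≤ 1 := hΨle1 w (hSsub hw)
    have hlog : Real.log (Ψ w) ≤ 0 := Real.log_nonpos hΨw.le hle1
    show ‖Real.log (Ψ w)‖ ≤ m1 / ε0 * (1 - w)
    rw [Real.norm_eq_abs, abs_of_nonpos hlog, ← Real.log_inv]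
    have h2 : Real.log (Ψ w)⁻¹ ≤ (Ψ w)⁻¹ - 1 := Real.log_le_sub_one_of_pos (inv_pos.2 hΨw)
    have h3 : (Ψ w)⁻¹ - 1 = (1 - Ψ w) / Ψ w := by field_simp
    have h4 : (1 - Ψ w) / Ψ w ≤ m1 * (1 - w) / ε0 :=
      div_le_div₀ (mul_nonneg hm1 (by linarith [hw.2])) (h1mΨ w hw) hε0 (hε0le w hw)
    calc Real.log (Ψ w)⁻¹ ≤ (1 - Ψ w) / Ψ w := by rw [← h3]; exact h2
      _ ≤ m1 * (1 - w) / ε0 := h4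
      _ = m1 / ε0 * (1 - w) := by ring
  have hsum0 : ∀ z ∈ S, Summable fun i : ℕ => L (a i z) := by
    intro z hz
    refine Summable.of_norm_bounded (g := fun i => m1 / ε0 * α ^ i)
      ((summable_geometric_of_lt_one hα0.le hα1).mul_left _) (fun i => ?_)
    refine le_trans (hLbound (a i z) (haS i z hz)) ?_
    have h1z : 1 - a i z = α ^ i * (1 - z) := by simp only [hadef]; ring
    rw [h1z]
    have h5 : (0:ℝ) ≤ m1 / ε0 := div_nonneg hm1 hε0.le
    have h6 : α ^ i * (1 - z) ≤ α ^ i := by nlinarith [hαpow i, hz.1]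
    nlinarith
  -- the series G and its derivative tower
  set G : ℕ → ℝ → ℝ := fun j z => ∑' i : ℕ, α ^ (i * j) * iteratedDerivWithin j L S (a i z)
    with hGdef
  have hGsum : ∀ j : ℕ, ∀ z ∈ S,
      Summable fun i : ℕ => α ^ (i * j) * iteratedDerivWithin j L S (a i z) := by
    intro j z hz
    rcases Nat.eq_zero_or_pos j with hj | hj
    · subst hj
      simp only [Nat.mul_zero, pow_zero, one_mul, iteratedDerivWithin_zero]
      exact hsum0 z hz
    · obtain ⟨C, hC0, hCb⟩ := hC j
      refine Summable.of_norm_bounded (g := fun i => C * (α ^ j) ^ i)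
        ((summable_geometric_of_lt_one (pow_nonneg hα0.le j)
          (pow_lt_one₀ hα0.le hα1 hj.ne')).mul_left C) (fun i => ?_)
      show ‖α ^ (i * j) * iteratedDerivWithin j L S (a i z)‖ ≤ C * (α ^ j) ^ i
      rw [norm_mul, Real.norm_eq_abs (α ^ (i * j)), abs_of_pos (hαpow _)]
      have hpow : α ^ (i * j) = (α ^ j) ^ i := by rw [← pow_mul, Nat.mul_comm]
      rw [hpow, mul_comm C]
      exact mul_le_mul_of_nonneg_left (hCb (a i z) (haS i z hz))
        (pow_nonneg (pow_nonneg hα0.le _) i)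
  have hGder : ∀ j : ℕ, ∀ z ∈ S, HasDerivWithinAt (G j) (G (j + 1) z) S z := by
    intro j z hz
    obtain ⟨C, hC0, hCb⟩ := hC (j + 1)
    simp only [hGdef]
    refine hasDerivWithinAt_tsum_convex
      (f := fun i w => α ^ (i * j) * iteratedDerivWithin j L S (a i w))
      (f' := fun i w => α ^ (i * (j + 1)) * iteratedDerivWithin (j + 1) L S (a i w))
      hSc (u := fun i => C * (α ^ (j + 1)) ^ i)
      ((summable_geometric_of_lt_one (pow_nonneg hα0.le _)
        (pow_lt_one₀ hα0.le hα1 (Nat.succ_ne_zero j))).mul_left C)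
      ?_ ?_ (fun y hy => hGsum j y hy) hz
    · intro i x hx
      have h1 := (hchain j i x hx).const_mul (α ^ (i * j))
      show HasDerivWithinAt (fun w => α ^ (i * j) * iteratedDerivWithin j L S (a i w))
        (α ^ (i * (j + 1)) * iteratedDerivWithin (j + 1) L S (a i x)) S x
      refine h1.congr_deriv ?_
      rw [show i * (j + 1) = i * j + i by ring, pow_add]
      ring
    · intro i x hx
      show ‖α ^ (i * (j + 1)) * iteratedDerivWithin (j + 1) L S (a i x)‖
        ≤ C * (α ^ (j + 1)) ^ i
      rw [norm_mul, Real.norm_eq_abs (α ^ (i * (j + 1))), abs_of_pos (hαpow _)]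
      have hpow : α ^ (i * (j + 1)) = (α ^ (j + 1)) ^ i := by rw [← pow_mul, Nat.mul_comm]
      rw [hpow, mul_comm C]
      exact mul_le_mul_of_nonneg_left (hCb (a i x) (haS i x hx))
        (pow_nonneg (pow_nonneg hα0.le _) i)
  have hGid : Set.EqOn (iteratedDerivWithin r (G 0) S) (G r) S :=
    tower_iteratedDerivWithin hSu hGder r
  -- log φ = G 0 on S
  have hlogφ : Set.EqOn (fun z => Real.log (φ z)) (G 0) S := by
    intro z hz
    have hprod := Real.rexp_tsum_eq_tprod (f := fun i => Ψ (a i z))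
      (fun i => hΨpos _ (haS i z hz)) (hsum0 z hz)
    have hφz : φ z = Real.exp (∑' i : ℕ, Real.log (Ψ (a i z))) := by
      rw [hφ z]
      exact hprod.symm
    show Real.log (φ z) = G 0 z
    rw [hφz, Real.log_exp]
    simp only [hGdef, Nat.mul_zero, pow_zero, one_mul, iteratedDerivWithin_zero]
    rfl
  -- locality
  have hIoi : Set.Ioi (1/2 : ℝ) ∈ nhds (1 : ℝ) := Ioi_mem_nhds (by norm_num)
  have hinter : Set.Icc (0:ℝ) 1 ∩ Set.Ioi (1/2 : ℝ) = S ∩ Set.Ioi (1/2 : ℝ) := by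
    rw [hSdef]
    ext x
    simp only [Set.mem_inter_iff, Set.mem_Icc, Set.mem_Ioi]
    constructor
    · rintro ⟨⟨h1, h2⟩, h3⟩; exact ⟨⟨le_of_lt h3, h2⟩, h3⟩
    · rintro ⟨⟨h1, h2⟩, h3⟩; exact ⟨⟨by linarith, h2⟩, h3⟩
  have hloc : ∀ F : ℝ → ℝ,
      iteratedDerivWithin r F (Set.Icc 0 1) 1 = iteratedDerivWithin r F S 1 := by
    intro F
    rw [← iteratedDerivWithin_inter' (n := r) (f := F) (s := Set.Icc (0:ℝ) 1) hIoi, hinter,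
      iteratedDerivWithin_inter' hIoi]
  -- geometric sum
  have hαr : α ^ r < 1 := pow_lt_one₀ hα0.le hα1 (by omega)
  have hαr0 : (0:ℝ) ≤ α ^ r := (hαpow r).le
  have hGr1 : G r 1 = iteratedDerivWithin r L S 1 * (1 - α ^ r)⁻¹ := by
    simp only [hGdef]
    have hcg : ∀ i : ℕ, α ^ (i * r) * iteratedDerivWithin r L S (a i 1)
        = (α ^ r) ^ i * iteratedDerivWithin r L S 1 := by
      intro i
      rw [ha1 i, ← pow_mul, Nat.mul_comm]
    rw [tsum_congr hcg, tsum_mul_right, tsum_geometric_of_lt_one hαr0 hαr]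
    ring
  -- final assembly
  rw [hloc (fun z => Real.log (φ z)), hloc (fun z => Real.log (Ψ z)),
    iteratedDerivWithin_congr hlogφ h1S, hGid h1S, hGr1, div_eq_mul_inv]


/-- Let `α ∈ (0,1)` and let `f` be a pmf on `ℕ` all of whose factorial moments
are finite, with pgf `Ψ`, and let `φ(z) = ∏_{i=0}^∞ Ψ(1 − α^i + α^i z)` be the pgf of the
pmf `p`. Then for every `r ≥ 1` the `r`-th factorial cumulant of `p` equals
`κ_[r]^{(f)} / (1 − α^r)`, where the `r`-th factorial cumulant of a pmf with pgf `G` is the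
`r`-th derivative at `z = 1` (taken within `[0,1]`) of `z ↦ ln G(z)`. -/
theorem stmt_5 (α : ℝ) (hα : α ∈ Set.Ioo (0 : ℝ) 1)
    (f : ℕ → ℝ) (hf0 : ∀ k, 0 ≤ f k) (hf1 : HasSum f 1)
    (hfacmom : ∀ r : ℕ, 1 ≤ r → Summable fun k : ℕ => (k.descFactorial r : ℝ) * f k)
    (Ψ : ℝ → ℝ) (hΨ : ∀ z, Ψ z = ∑' k : ℕ, f k * z ^ k)
    (p : ℕ → ℝ) (hp0 : ∀ r, 0 ≤ p r) (hp1 : HasSum p 1)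
    (φ : ℝ → ℝ) (hφ : ∀ z, φ z = ∏' i : ℕ, Ψ (1 - α ^ i + α ^ i * z))
    (hppgf : ∀ z ∈ Set.Icc (0 : ℝ) 1, (∑' r : ℕ, p r * z ^ r) = φ z) :
    ∀ r : ℕ, 1 ≤ r →
      iteratedDerivWithin r (fun z => Real.log (φ z)) (Set.Icc 0 1) 1 =
        iteratedDerivWithin r (fun z => Real.log (Ψ z)) (Set.Icc 0 1) 1 / (1 - α ^ r) := by
  exact stmt_5_main α hα f hf0 hf1 hfacmom Ψ hΨ φ hφ
end

section
/- Let α ∈ (0,1) and let f be a pmf on ℕ with finite mean μ^{(f)} = ∑_{k} k·f(k) and finite variance (σ^{(f)})² = ∑_k k²·f(k) − (μ^{(f)})², with pgf Ψ, and let p be the pmf with pgf φ(z) = ∏_{i=0}^∞ Ψ(1 − α^i + α^i z). Then the mean μ^{(p)} and variance (σ^{(p)})² of p are finite and given by μ^{(p)} = μ^{(f)} / (1 − α) and (σ^{(p)})² = ((σ^{(f)})² + α·μ^{(f)}) / (1 − α²). -/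
open Filter Finset Topology
set_option maxHeartbeats 1000000

private lemma aux_mult {Q : ℕ → ℝ} (h0 : ∀ i, 0 ≤ Q i) (h1 : ∀ i, Q i ≤ 1) :
    Multipliable Q := by
  refine ⟨⨅ s : Finset ℕ, ∏ i ∈ s, Q i, tendsto_atTop_ciInf ?_ ?_⟩
  · intro s t hst
    calc ∏ i ∈ t, Q i = (∏ i ∈ t \ s, Q i) * ∏ i ∈ s, Q i := (Finset.prod_sdiff hst).symm
      _ ≤ 1 * ∏ i ∈ s, Q i := by
          gcongr
          · exact Finset.prod_nonneg fun i _ => h0 i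
          · exact Finset.prod_le_one (fun i _ => h0 i) (fun i _ => h1 i)
      _ = ∏ i ∈ s, Q i := one_mul _
  · exact ⟨0, fun x ⟨s, hs⟩ => hs ▸ Finset.prod_nonneg fun i _ => h0 i⟩

private lemma geom_id (z : ℝ) (r : ℕ) : 1 - z ^ r = (1 - z) * ∑ i ∈ range r, z ^ i := by
  linear_combination geom_sum_mul z r

private lemma geom2_id (z : ℝ) (r : ℕ) :
    (r : ℝ) * (1 - z) - (1 - z ^ r) = (1 - z) ^ 2 * ∑ j ∈ range r, ∑ i ∈ range j, z ^ i := by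
  induction r with
  | zero => simp
  | succ n ih =>
      rw [Finset.sum_range_succ]
      push_cast
      linear_combination ih + (1 - z) * geom_id z n

private lemma h_nonneg {z : ℝ} (hz : 0 ≤ z) (r : ℕ) : 0 ≤ ∑ i ∈ range r, z ^ i :=
  Finset.sum_nonneg fun i _ => pow_nonneg hz i

private lemma h_le {z : ℝ} (hz : z ∈ Set.Icc (0:ℝ) 1) (r : ℕ) :
    ∑ i ∈ range r, z ^ i ≤ (r : ℝ) := by
  calc ∑ i ∈ range r, z ^ i ≤ ∑ i ∈ range r, 1 :=
        Finset.sum_le_sum fun i _ => pow_le_one₀ hz.1 hz.2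
    _ = (r : ℝ) := by simp

private lemma h_one (r : ℕ) : ∑ i ∈ range r, (1:ℝ) ^ i = (r : ℝ) := by simp

private lemma gauss (r : ℕ) : ∑ j ∈ range r, (j : ℝ) = r * (r - 1) / 2 := by
  induction r with
  | zero => simp
  | succ n ih => rw [Finset.sum_range_succ, ih]; push_cast; ring

private lemma G_nonneg {z : ℝ} (hz : 0 ≤ z) (r : ℕ) :
    0 ≤ ∑ j ∈ range r, ∑ i ∈ range j, z ^ i :=
  Finset.sum_nonneg fun j _ => h_nonneg hz j

private lemma G_le {z : ℝ} (hz : z ∈ Set.Icc (0:ℝ) 1) (r : ℕ) :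
    ∑ j ∈ range r, ∑ i ∈ range j, z ^ i ≤ (r : ℝ) * (r - 1) / 2 := by
  rw [← gauss]
  exact Finset.sum_le_sum fun j _ => h_le hz j

private lemma G_one (r : ℕ) : ∑ j ∈ range r, ∑ i ∈ range j, (1:ℝ) ^ i = (r:ℝ) * (r - 1) / 2 := by
  simp [gauss]

-- summability of q k z^k
private lemma pmf_summable_pow {q : ℕ → ℝ} (hq0 : ∀ k, 0 ≤ q k) (hq : Summable q)
    {z : ℝ} (hz : z ∈ Set.Icc (0:ℝ) 1) : Summable fun k => q k * z ^ k := by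
  refine Summable.of_nonneg_of_le (fun k => mul_nonneg (hq0 k) (pow_nonneg hz.1 k)) (fun k => ?_) hq
  calc q k * z ^ k ≤ q k * 1 := by
        gcongr
        · exact hq0 k
        · exact pow_le_one₀ hz.1 hz.2
    _ = q k := mul_one _

private lemma pmf_hasSum_one_sub {q : ℕ → ℝ} (hq0 : ∀ k, 0 ≤ q k) (hq1 : HasSum q 1)
    {z : ℝ} (hz : z ∈ Set.Icc (0:ℝ) 1) :
    HasSum (fun k => q k * (1 - z ^ k)) (1 - ∑' k, q k * z ^ k) := by
  have h2 := (pmf_summable_pow hq0 hq1.summable hz).hasSum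
  have := hq1.sub h2
  refine this.congr_fun fun k => by ring

-- the generic limit lemma
private lemma tendsto_tsum_poly (q : ℕ → ℝ) (hq0 : ∀ r, 0 ≤ q r) (φ : ℕ → ℝ → ℝ)
    (hφc : ∀ r, Continuous (φ r))
    (hφ0 : ∀ r, ∀ z ∈ Set.Ico (0:ℝ) 1, 0 ≤ φ r z)
    (hφb : ∀ r, ∀ z ∈ Set.Ico (0:ℝ) 1, φ r z ≤ φ r 1)
    (hs : Summable fun r => q r * φ r 1) :
    Tendsto (fun z => ∑' r, q r * φ r z) (𝓝[<] (1:ℝ)) (𝓝 (∑' r, q r * φ r 1)) := by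
  have hmem : Set.Ico (0:ℝ) 1 ∈ 𝓝[<] (1:ℝ) := by
    have h1 : Set.Ioi (0:ℝ) ∈ 𝓝[<] (1:ℝ) :=
      nhdsWithin_le_nhds (Ioi_mem_nhds one_pos)
    have h2 : Set.Iio (1:ℝ) ∈ 𝓝[<] (1:ℝ) := self_mem_nhdsWithin
    filter_upwards [h1, h2] with z hz1 hz2
    exact ⟨le_of_lt hz1, hz2⟩
  have key : ∀ z ∈ Set.Ico (0:ℝ) 1, Summable (fun r => q r * φ r z) := by
    intro z hz
    refine Summable.of_nonneg_of_le (fun r => mul_nonneg (hq0 r) (hφ0 r z hz))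
      (fun r => ?_) hs
    exact mul_le_mul_of_nonneg_left (hφb r z hz) (hq0 r)
  have hub : ∀ z ∈ Set.Ico (0:ℝ) 1, (∑' r, q r * φ r z) ≤ ∑' r, q r * φ r 1 := by
    intro z hz
    exact Summable.tsum_le_tsum (fun r => mul_le_mul_of_nonneg_left (hφb r z hz) (hq0 r)) (key z hz) hs
  rw [Metric.tendsto_nhds]
  intro ε hε
  set L := ∑' r, q r * φ r 1 with hL
  obtain ⟨N, hN⟩ : ∃ N, L - ε / 2 < ∑ r ∈ range N, q r * φ r 1 := by
    have := hs.hasSum.tendsto_sum_nat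
    have h3 : ∀ᶠ n in atTop, L - ε / 2 < ∑ r ∈ range n, q r * φ r 1 :=
      this.eventually (eventually_gt_nhds (by linarith))
    exact h3.exists
  have hcont : Tendsto (fun z => ∑ r ∈ range N, q r * φ r z) (𝓝[<] (1:ℝ))
      (𝓝 (∑ r ∈ range N, q r * φ r 1)) := by
    apply Tendsto.mono_left _ nhdsWithin_le_nhds
    exact Continuous.tendsto
      (continuous_finset_sum _ fun r _ => continuous_const.mul (hφc r)) 1
  have hev : ∀ᶠ z in 𝓝[<] (1:ℝ), L - ε/2 < ∑ r ∈ range N, q r * φ r z := by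
    have : ∀ᶠ y in 𝓝 (∑ r ∈ range N, q r * φ r 1), L - ε/2 < y :=
      eventually_gt_nhds hN
    exact hcont.eventually this
  filter_upwards [hmem, hev] with z hz hz2
  rw [Real.dist_eq, abs_sub_lt_iff]
  constructor
  · have h4 : ∑ r ∈ range N, q r * φ r z ≤ ∑' r, q r * φ r z :=
      Summable.sum_le_tsum (range N) (fun r _ => mul_nonneg (hq0 r) (hφ0 r z hz)) (key z hz)
    linarith [hub z hz]
  · have h4 : ∑ r ∈ range N, q r * φ r z ≤ ∑' r, q r * φ r z :=
      Summable.sum_le_tsum (range N) (fun r _ => mul_nonneg (hq0 r) (hφ0 r z hz)) (key z hz)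
    linarith [hub z hz]

private lemma one_sub_pow_le {z : ℝ} (hz : z ∈ Set.Icc (0:ℝ) 1) (r : ℕ) :
    1 - z ^ r ≤ (r : ℝ) * (1 - z) := by
  rw [geom_id z r]
  have := h_le hz r
  nlinarith [sub_nonneg.2 hz.2]

private lemma cknn (k : ℕ) : 0 ≤ (k:ℝ) * ((k:ℝ) - 1) / 2 := by
  rcases k with _ | n
  · norm_num
  · have h1 : (0:ℝ) ≤ (n : ℝ) := Nat.cast_nonneg n
    push_cast
    nlinarith

/-- Let `α ∈ (0,1)` and let `f` be a pmf on `ℕ` with finite mean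
`μ⁽ᶠ⁾ = ∑ k·f(k)` and finite variance `σ⁽ᶠ⁾² = ∑ k²·f(k) − μ⁽ᶠ⁾²`, with pgf `Ψ`, and let
`p` be the pmf with pgf `φ(z) = ∏_{i=0}^∞ Ψ(1 − α^i + α^i z)`. Then the mean and variance
of `p` are finite and `μ⁽ᵖ⁾ = μ⁽ᶠ⁾/(1 − α)`, `σ⁽ᵖ⁾² = (σ⁽ᶠ⁾² + α·μ⁽ᶠ⁾)/(1 − α²)`. -/
theorem stmt_6 (α : ℝ) (hα : α ∈ Set.Ioo (0 : ℝ) 1)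
    (f : ℕ → ℝ) (hf0 : ∀ k, 0 ≤ f k) (hf1 : HasSum f 1)
    (hmean : Summable fun k : ℕ => (k : ℝ) * f k)
    (hmom2 : Summable fun k : ℕ => (k : ℝ) ^ 2 * f k)
    (Ψ : ℝ → ℝ) (hΨ : ∀ z, Ψ z = ∑' k : ℕ, f k * z ^ k)
    (p : ℕ → ℝ) (hp0 : ∀ r, 0 ≤ p r) (hp1 : HasSum p 1)
    (hppgf : ∀ z ∈ Set.Icc (0 : ℝ) 1,
      (∑' r : ℕ, p r * z ^ r) = ∏' i : ℕ, Ψ (1 - α ^ i + α ^ i * z)) :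
    (Summable fun k : ℕ => (k : ℝ) * p k) ∧
    (Summable fun k : ℕ => (k : ℝ) ^ 2 * p k) ∧
    (∑' k : ℕ, (k : ℝ) * p k) = (∑' k : ℕ, (k : ℝ) * f k) / (1 - α) ∧
    (∑' k : ℕ, (k : ℝ) ^ 2 * p k) - (∑' k : ℕ, (k : ℝ) * p k) ^ 2 =
      ((∑' k : ℕ, (k : ℝ) ^ 2 * f k) - (∑' k : ℕ, (k : ℝ) * f k) ^ 2
        + α * ∑' k : ℕ, (k : ℝ) * f k) / (1 - α ^ 2) := by
  obtain ⟨hα0, hα1⟩ := hα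
  have h1a : (0:ℝ) < 1 - α := by linarith
  set μ : ℝ := ∑' k : ℕ, (k : ℝ) * f k with hμdef
  set F : ℝ → ℝ := fun z => ∑' k : ℕ, f k * z ^ k with hFdef
  set P : ℝ → ℝ := fun z => ∑' r : ℕ, p r * z ^ r with hPdef
  have hμ0 : 0 ≤ μ := tsum_nonneg fun k => mul_nonneg (Nat.cast_nonneg k) (hf0 k)
  -- F bounds
  have hF0 : ∀ z ∈ Set.Icc (0:ℝ) 1, 0 ≤ F z := fun z hz =>
    tsum_nonneg fun k => mul_nonneg (hf0 k) (pow_nonneg hz.1 k)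
  have hF1 : ∀ z ∈ Set.Icc (0:ℝ) 1, F z ≤ 1 := by
    intro z hz
    have := Summable.tsum_le_tsum (f := fun k => f k * z ^ k) (g := f)
      (fun k => by
        calc f k * z ^ k ≤ f k * 1 := by
              gcongr
              · exact hf0 k
              · exact pow_le_one₀ hz.1 hz.2
          _ = f k := mul_one _)
      (pmf_summable_pow hf0 hf1.summable hz) hf1.summable
    rwa [hf1.tsum_eq] at this
  have hμsum : ∀ z : ℝ, Summable fun k : ℕ => f k * ((k:ℝ) * (1 - z)) := by
    intro z
    exact ((hmean.mul_right (1 - z)).congr (fun k => by ring))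
  have hFub : ∀ z ∈ Set.Icc (0:ℝ) 1, 1 - F z ≤ μ * (1 - z) := by
    intro z hz
    have h1 := pmf_hasSum_one_sub hf0 hf1 hz
    rw [← h1.tsum_eq]
    have h2 : HasSum (fun k : ℕ => f k * ((k:ℝ) * (1 - z))) (μ * (1 - z)) :=
      (hmean.hasSum.mul_right (1 - z)).congr_fun (fun k => by ring)
    rw [← h2.tsum_eq]
    refine Summable.tsum_le_tsum (fun k => ?_) h1.summable h2.summable
    have hk : 1 - z ^ k ≤ (k:ℝ) * (1 - z) := by
      rw [geom_id z k]
      have := h_le hz k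
      nlinarith [sub_nonneg.2 hz.2]
    exact mul_le_mul_of_nonneg_left hk (hf0 k)
  -- Ψ facts on [0,1]
  have hΨF : ∀ y, Ψ y = F y := fun y => hΨ y
  have hΨ0 : ∀ y ∈ Set.Icc (0:ℝ) 1, 0 ≤ Ψ y := fun y hy => (hΨF y) ▸ hF0 y hy
  have hΨ1 : ∀ y ∈ Set.Icc (0:ℝ) 1, Ψ y ≤ 1 := fun y hy => (hΨF y) ▸ hF1 y hy
  -- membership facts
  have hwmem : ∀ z ∈ Set.Icc (0:ℝ) 1, (1 - α + α * z) ∈ Set.Icc (0:ℝ) 1 := by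
    intro z hz
    constructor
    · nlinarith [hz.1, hz.2]
    · nlinarith [hz.1, hz.2]
  have humem : ∀ (i : ℕ), ∀ z ∈ Set.Icc (0:ℝ) 1, (1 - α ^ i + α ^ i * z) ∈ Set.Icc (0:ℝ) 1 := by
    intro i z hz
    have h1 : 0 < α ^ i := pow_pos hα0 i
    have h2 : α ^ i ≤ 1 := pow_le_one₀ (le_of_lt hα0) (le_of_lt hα1)
    constructor
    · nlinarith [hz.1, hz.2]
    · nlinarith [hz.1, hz.2]
  -- functional equation
  have hFE : ∀ z ∈ Set.Icc (0:ℝ) 1, P z = F z * P (1 - α + α * z) := by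
    intro z hz
    have hmult : Multipliable fun i : ℕ => Ψ (1 - α ^ (i + 1) + α ^ (i + 1) * z) :=
      aux_mult (fun i => hΨ0 _ (humem (i+1) z hz)) (fun i => hΨ1 _ (humem (i+1) z hz))
    have h1 : P z = ∏' i : ℕ, Ψ (1 - α ^ i + α ^ i * z) := hppgf z hz
    rw [h1, tprod_eq_zero_mul' hmult]
    have h2 : Ψ (1 - α ^ 0 + α ^ 0 * z) = F z := by
      rw [hΨF]; norm_num
    have h3 : (∏' i : ℕ, Ψ (1 - α ^ (i + 1) + α ^ (i + 1) * z)) = P (1 - α + α * z) := by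
      calc (∏' i : ℕ, Ψ (1 - α ^ (i + 1) + α ^ (i + 1) * z))
          = ∏' i : ℕ, Ψ (1 - α ^ i + α ^ i * (1 - α + α * z)) :=
            tprod_congr fun i => congrArg Ψ (by ring)
        _ = P (1 - α + α * z) := (hppgf _ (hwmem z hz)).symm
    rw [h2, h3]
  -- P basic bounds
  have hP0 : ∀ z ∈ Set.Icc (0:ℝ) 1, 0 ≤ P z := fun z hz =>
    tsum_nonneg fun r => mul_nonneg (hp0 r) (pow_nonneg hz.1 r)
  have hP1 : ∀ z ∈ Set.Icc (0:ℝ) 1, P z ≤ 1 := by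
    intro z hz
    have := Summable.tsum_le_tsum (f := fun r => p r * z ^ r) (g := p)
      (fun r => by
        calc p r * z ^ r ≤ p r * 1 := by
              gcongr
              · exact hp0 r
              · exact pow_le_one₀ hz.1 hz.2
          _ = p r := mul_one _)
      (pmf_summable_pow hp0 hp1.summable hz) hp1.summable
    rwa [hp1.tsum_eq] at this
  -- single step inequality
  have hstep : ∀ z ∈ Set.Icc (0:ℝ) 1, 1 - P z ≤ μ * (1 - z) + (1 - P (1 - α + α * z)) := by
    intro z hz
    have h1 := hFE z hz
    have h2 := hFub z hz
    have h3 := hF1 z hz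
    have h4 := hF0 z hz
    have h5 := hP1 _ (hwmem z hz)
    have h6 := hP0 _ (hwmem z hz)
    nlinarith
  have hzseqmem : ∀ z ∈ Set.Icc (0:ℝ) 1, ∀ n : ℕ, (1 - α ^ n * (1 - z)) ∈ Set.Icc (0:ℝ) 1 := by
    intro z hz n
    have h1 : 0 < α ^ n := pow_pos hα0 n
    have h2 : α ^ n ≤ 1 := pow_le_one₀ (le_of_lt hα0) (le_of_lt hα1)
    constructor
    · nlinarith [hz.1, hz.2]
    · nlinarith [hz.1, hz.2]
  have hiter : ∀ z ∈ Set.Icc (0:ℝ) 1, ∀ n : ℕ,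
      1 - P z ≤ μ * (1 - z) * (∑ j ∈ range n, α ^ j) + (1 - P (1 - α ^ n * (1 - z))) := by
    intro z hz n
    induction n with
    | zero =>
        have : (1 - α ^ 0 * (1 - z)) = z := by ring
        rw [this]
        simp
    | succ n ih =>
        have h1 := hstep _ (hzseqmem z hz n)
        have e1 : 1 - (1 - α ^ n * (1 - z)) = α ^ n * (1 - z) := by ring
        have e2 : (1 - α + α * (1 - α ^ n * (1 - z))) = 1 - α ^ (n+1) * (1 - z) := by ring
        rw [e1, e2] at h1
        rw [Finset.sum_range_succ]
        nlinarith [h1, ih]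
  -- tail bound
  have hsub1P : ∀ z ∈ Set.Icc (0:ℝ) 1,
      HasSum (fun r : ℕ => p r * (1 - z ^ r)) (1 - P z) := fun z hz =>
    pmf_hasSum_one_sub hp0 hp1 hz
  have htail : ∀ y ∈ Set.Icc (0:ℝ) 1, ∀ N : ℕ,
      1 - P y ≤ (N : ℝ) * (1 - y) + ∑' r : ℕ, p (r + N) := by
    intro y hy N
    have hS := hsub1P y hy
    rw [← hS.tsum_eq, ← Summable.sum_add_tsum_nat_add N hS.summable]
    have hhead : ∑ r ∈ range N, p r * (1 - y ^ r) ≤ (N : ℝ) * (1 - y) := by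
      calc ∑ r ∈ range N, p r * (1 - y ^ r)
          ≤ ∑ r ∈ range N, p r * ((N : ℝ) * (1 - y)) := by
            refine Finset.sum_le_sum fun r hr => ?_
            refine mul_le_mul_of_nonneg_left ?_ (hp0 r)
            refine le_trans (one_sub_pow_le hy r) ?_
            have : (r : ℝ) ≤ (N : ℝ) := Nat.cast_le.2 (le_of_lt (Finset.mem_range.1 hr))
            nlinarith [sub_nonneg.2 hy.2]
        _ = (∑ r ∈ range N, p r) * ((N : ℝ) * (1 - y)) := by rw [Finset.sum_mul]
        _ ≤ 1 * ((N : ℝ) * (1 - y)) := by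
            refine mul_le_mul_of_nonneg_right ?_
              (mul_nonneg (Nat.cast_nonneg N) (by linarith [hy.2]))
            rw [← hp1.tsum_eq]
            exact Summable.sum_le_tsum (range N) (fun r _ => hp0 r) hp1.summable
        _ = (N : ℝ) * (1 - y) := one_mul _
    have htl : ∑' r : ℕ, p (r + N) * (1 - y ^ (r + N)) ≤ ∑' r : ℕ, p (r + N) := by
      refine Summable.tsum_le_tsum (fun r => ?_) ((summable_nat_add_iff N).2 hS.summable) 
        ((summable_nat_add_iff N).2 hp1.summable)
      nlinarith [hp0 (r + N), pow_nonneg hy.1 (r + N), (pow_le_one₀ hy.1 hy.2 : y ^ (r+N) ≤ 1)]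
    linarith
  have htail0 : Tendsto (fun N : ℕ => ∑' r : ℕ, p (r + N)) atTop (𝓝 0) := by
    have he : ∀ N : ℕ, ∑' r : ℕ, p (r + N) = 1 - ∑ r ∈ range N, p r := by
      intro N
      have := Summable.sum_add_tsum_nat_add N hp1.summable (f := p)
      rw [hp1.tsum_eq] at this
      linarith
    simp_rw [he]
    have := hp1.tendsto_sum_nat
    have h2 : Tendsto (fun N : ℕ => 1 - ∑ r ∈ range N, p r) atTop (𝓝 (1 - 1)) :=
      tendsto_const_nhds.sub this
    simpa using h2
  -- the uniform bound
  have hgeomsum : ∀ n : ℕ, (∑ j ∈ range n, α ^ j) ≤ 1 / (1 - α) := by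
    intro n
    have h1 := geom_id α n
    have h2 : α ^ n ≥ 0 := pow_nonneg (le_of_lt hα0) n
    rw [le_div_iff₀ h1a]
    nlinarith
  have hG : ∀ z ∈ Set.Icc (0:ℝ) 1, 1 - P z ≤ μ * (1 - z) / (1 - α) := by
    intro z hz
    have key : ∀ N : ℕ, 1 - P z ≤ μ * (1 - z) / (1 - α) + ∑' r : ℕ, p (r + N) := by
      intro N
      have hb : ∀ n : ℕ, 1 - P z - (∑' r : ℕ, p (r + N)) - μ * (1 - z) / (1 - α)
          ≤ (N : ℝ) * (1 - z) * α ^ n := by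
        intro n
        have h1 := hiter z hz n
        have h2 := htail _ (hzseqmem z hz n) N
        have e1 : 1 - (1 - α ^ n * (1 - z)) = α ^ n * (1 - z) := by ring
        rw [e1] at h2
        have h3 : μ * (1 - z) * (∑ j ∈ range n, α ^ j) ≤ μ * (1 - z) / (1 - α) := by
          have h4 : 0 ≤ μ * (1 - z) := mul_nonneg hμ0 (by linarith [hz.2])
          have h5 := hgeomsum n
          calc μ * (1 - z) * (∑ j ∈ range n, α ^ j) ≤ μ * (1 - z) * (1 / (1 - α)) :=
                mul_le_mul_of_nonneg_left h5 h4
            _ = μ * (1 - z) / (1 - α) := by ring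
        nlinarith
      have ht : Tendsto (fun n : ℕ => (N : ℝ) * (1 - z) * α ^ n) atTop (𝓝 0) := by
        have := tendsto_pow_atTop_nhds_zero_of_lt_one (le_of_lt hα0) hα1
        simpa using this.const_mul ((N : ℝ) * (1 - z))
      have := ge_of_tendsto' ht hb
      linarith
    have h9 : ∀ N : ℕ, 1 - P z - μ * (1 - z) / (1 - α) ≤ ∑' r : ℕ, p (r + N) :=
      fun N => by linarith [key N]
    have := ge_of_tendsto' htail0 h9
    linarith
  -- membership of Ico in the filter
  have hmemIco : Set.Ico (0:ℝ) 1 ∈ 𝓝[<] (1:ℝ) := by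
    have h1 : Set.Ioi (0:ℝ) ∈ 𝓝[<] (1:ℝ) := nhdsWithin_le_nhds (Ioi_mem_nhds one_pos)
    have h2 : Set.Iio (1:ℝ) ∈ 𝓝[<] (1:ℝ) := self_mem_nhdsWithin
    filter_upwards [h1, h2] with z hz1 hz2
    exact ⟨le_of_lt hz1, hz2⟩
  -- summability of the mean of p
  have hνsum : Summable fun r : ℕ => (r : ℝ) * p r := by
    refine summable_of_sum_range_le (c := μ / (1 - α))
      (fun r => mul_nonneg (Nat.cast_nonneg r) (hp0 r)) (fun N => ?_)
    have hb : ∀ z ∈ Set.Ico (0:ℝ) 1,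
        ∑ r ∈ range N, p r * (∑ i ∈ range r, z ^ i) ≤ μ / (1 - α) := by
      intro z hz
      have hzI : z ∈ Set.Icc (0:ℝ) 1 := ⟨hz.1, le_of_lt hz.2⟩
      have h1z : 0 < 1 - z := by linarith [hz.2]
      refine le_of_mul_le_mul_left ?_ h1z
      have e1 : (1 - z) * ∑ r ∈ range N, p r * (∑ i ∈ range r, z ^ i)
          = ∑ r ∈ range N, p r * (1 - z ^ r) := by
        rw [Finset.mul_sum]
        exact Finset.sum_congr rfl fun r _ => by rw [geom_id z r]; ring
      rw [e1]
      have h2 : ∑ r ∈ range N, p r * (1 - z ^ r) ≤ 1 - P z := by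
        rw [← (hsub1P z hzI).tsum_eq]
        refine Summable.sum_le_tsum (range N) (fun r _ => ?_) (hsub1P z hzI).summable
        exact mul_nonneg (hp0 r) (by nlinarith [(pow_le_one₀ hzI.1 hzI.2 : z ^ r ≤ 1)])
      have h3 := hG z hzI
      calc ∑ r ∈ range N, p r * (1 - z ^ r) ≤ 1 - P z := h2
        _ ≤ μ * (1 - z) / (1 - α) := h3
        _ = (1 - z) * (μ / (1 - α)) := by ring
    have hcont : Tendsto (fun z => ∑ r ∈ range N, p r * (∑ i ∈ range r, z ^ i))
        (𝓝[<] (1:ℝ)) (𝓝 (∑ r ∈ range N, p r * (∑ i ∈ range r, (1:ℝ) ^ i))) := by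
      apply Tendsto.mono_left _ nhdsWithin_le_nhds
      refine Continuous.tendsto ?_ 1
      exact continuous_finset_sum _ fun r _ =>
        continuous_const.mul (continuous_finset_sum _ fun i _ => continuous_pow i)
    have h4 : ∑ r ∈ range N, p r * (∑ i ∈ range r, (1:ℝ) ^ i) ≤ μ / (1 - α) := by
      refine le_of_tendsto hcont ?_
      filter_upwards [hmemIco] with z hz
      exact hb z hz
    calc ∑ r ∈ range N, (r : ℝ) * p r
        = ∑ r ∈ range N, p r * (∑ i ∈ range r, (1:ℝ) ^ i) :=
          Finset.sum_congr rfl fun r _ => by rw [h_one]; ring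
      _ ≤ μ / (1 - α) := h4
  set ν : ℝ := ∑' r : ℕ, (r : ℝ) * p r with hνdef
  have hν0 : 0 ≤ ν := tsum_nonneg fun r => mul_nonneg (Nat.cast_nonneg r) (hp0 r)
  -- summability of geometric-sum representations
  have hsumPh : ∀ z ∈ Set.Icc (0:ℝ) 1, Summable fun r : ℕ => p r * (∑ i ∈ range r, z ^ i) := by
    intro z hz
    refine Summable.of_nonneg_of_le (fun r => mul_nonneg (hp0 r) (h_nonneg hz.1 r))
      (fun r => ?_) ((hνsum.congr fun r => mul_comm (r:ℝ) (p r)) :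
        Summable fun r : ℕ => p r * (r:ℝ))
    exact mul_le_mul_of_nonneg_left (h_le hz r) (hp0 r)
  have hsumFh : ∀ z ∈ Set.Icc (0:ℝ) 1, Summable fun k : ℕ => f k * (∑ i ∈ range k, z ^ i) := by
    intro z hz
    refine Summable.of_nonneg_of_le (fun k => mul_nonneg (hf0 k) (h_nonneg hz.1 k))
      (fun k => ?_) ((hmean.congr fun k => mul_comm (k:ℝ) (f k)) :
        Summable fun k : ℕ => f k * (k:ℝ))
    exact mul_le_mul_of_nonneg_left (h_le hz k) (hf0 k)
  -- representations
  have hPrep : ∀ z ∈ Set.Icc (0:ℝ) 1,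
      1 - P z = (1 - z) * ∑' r : ℕ, p r * (∑ i ∈ range r, z ^ i) := by
    intro z hz
    have h2 : HasSum (fun r : ℕ => (1 - z) * (p r * (∑ i ∈ range r, z ^ i))) (1 - P z) :=
      (hsub1P z hz).congr_fun fun r => by rw [geom_id z r]; ring
    have h3 := ((hsumPh z hz).hasSum.mul_left (1 - z))
    exact (h2.unique h3)
  have hFrep : ∀ z ∈ Set.Icc (0:ℝ) 1,
      1 - F z = (1 - z) * ∑' k : ℕ, f k * (∑ i ∈ range k, z ^ i) := by
    intro z hz
    have h2 : HasSum (fun k : ℕ => (1 - z) * (f k * (∑ i ∈ range k, z ^ i))) (1 - F z) :=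
      (pmf_hasSum_one_sub hf0 hf1 hz).congr_fun fun k => by rw [geom_id z k]; ring
    have h3 := ((hsumFh z hz).hasSum.mul_left (1 - z))
    exact (h2.unique h3)
  -- limits of the geometric-sum tsums
  have hSP : Tendsto (fun z => ∑' r : ℕ, p r * (∑ i ∈ range r, z ^ i)) (𝓝[<] (1:ℝ)) (𝓝 ν) := by
    have hs1 : Summable fun r : ℕ => p r * (∑ i ∈ range r, (1:ℝ) ^ i) :=
      hνsum.congr fun r => by rw [h_one]; ring
    have h0 := tendsto_tsum_poly p hp0 (fun r z => ∑ i ∈ range r, z ^ i)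
      (fun r => continuous_finset_sum _ fun i _ => continuous_pow i)
      (fun r z hz => h_nonneg hz.1 r)
      (fun r z hz => by
        simpa [h_one] using h_le ⟨hz.1, le_of_lt hz.2⟩ r)
      hs1
    have h0' : Tendsto (fun z => ∑' r : ℕ, p r * (∑ i ∈ range r, z ^ i)) (𝓝[<] (1:ℝ))
        (𝓝 (∑' r : ℕ, p r * (∑ i ∈ range r, (1:ℝ) ^ i))) := h0
    have e : (∑' r : ℕ, p r * (∑ i ∈ range r, (1:ℝ) ^ i)) = ν :=
      tsum_congr fun r => by rw [h_one]; ring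
    rwa [e] at h0'
  have hSF : Tendsto (fun z => ∑' k : ℕ, f k * (∑ i ∈ range k, z ^ i)) (𝓝[<] (1:ℝ)) (𝓝 μ) := by
    have hs1 : Summable fun k : ℕ => f k * (∑ i ∈ range k, (1:ℝ) ^ i) :=
      hmean.congr fun k => by rw [h_one]; ring
    have h0 := tendsto_tsum_poly f hf0 (fun k z => ∑ i ∈ range k, z ^ i)
      (fun k => continuous_finset_sum _ fun i _ => continuous_pow i)
      (fun k z hz => h_nonneg hz.1 k)
      (fun k z hz => by
        simpa [h_one] using h_le ⟨hz.1, le_of_lt hz.2⟩ k)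
      hs1
    have h0' : Tendsto (fun z => ∑' k : ℕ, f k * (∑ i ∈ range k, z ^ i)) (𝓝[<] (1:ℝ))
        (𝓝 (∑' k : ℕ, f k * (∑ i ∈ range k, (1:ℝ) ^ i))) := h0
    have e : (∑' k : ℕ, f k * (∑ i ∈ range k, (1:ℝ) ^ i)) = μ :=
      tsum_congr fun k => by rw [h_one]; ring
    rwa [e] at h0'
  -- w tendsto
  have hwt : Tendsto (fun z : ℝ => 1 - α + α * z) (𝓝[<] (1:ℝ)) (𝓝[<] (1:ℝ)) := by
    refine tendsto_nhdsWithin_of_tendsto_nhds_of_eventually_within _ ?_ ?_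
    · have h1 : Tendsto (fun z : ℝ => 1 - α + α * z) (𝓝 1) (𝓝 (1 - α + α * 1)) :=
        Continuous.tendsto (continuous_const.add (continuous_const.mul continuous_id)) 1
      have h2 := h1.mono_left (nhdsWithin_le_nhds (s := Set.Iio (1:ℝ)))
      simpa using h2
    · filter_upwards [self_mem_nhdsWithin] with z hz
      simp only [Set.mem_Iio] at hz ⊢
      nlinarith
  -- F tends to 1
  have hFlim : Tendsto F (𝓝[<] (1:ℝ)) (𝓝 1) := by
    have hid : Tendsto (fun z : ℝ => z) (𝓝[<] (1:ℝ)) (𝓝 1) :=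
      tendsto_id.mono_left nhdsWithin_le_nhds
    have h1 : Tendsto (fun z : ℝ => 1 - (1 - z) * ∑' k : ℕ, f k * (∑ i ∈ range k, z ^ i))
        (𝓝[<] (1:ℝ)) (𝓝 (1 - (1 - 1) * μ)) :=
      tendsto_const_nhds.sub ((tendsto_const_nhds.sub hid).mul hSF)
    have h2 : Tendsto (fun z : ℝ => 1 - (1 - z) * ∑' k : ℕ, f k * (∑ i ∈ range k, z ^ i))
        (𝓝[<] (1:ℝ)) (𝓝 1) := by simpa using h1
    refine h2.congr' ?_
    filter_upwards [hmemIco] with z hz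
    have := hFrep z ⟨hz.1, le_of_lt hz.2⟩
    linarith
  -- the mean equation
  have hmeq : ∀ z ∈ Set.Ico (0:ℝ) 1,
      (∑' r : ℕ, p r * (∑ i ∈ range r, z ^ i)) =
        (∑' k : ℕ, f k * (∑ i ∈ range k, z ^ i)) +
          α * (F z * ∑' r : ℕ, p r * (∑ i ∈ range r, (1 - α + α * z) ^ i)) := by
    intro z hz
    have hzI : z ∈ Set.Icc (0:ℝ) 1 := ⟨hz.1, le_of_lt hz.2⟩
    have hwI := hwmem z hzI
    have h1z : (1 - z) ≠ 0 := by intro h; rw [sub_eq_zero] at h; exact (ne_of_lt hz.2) h.symm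
    refine mul_left_cancel₀ h1z ?_
    have e1 := hPrep z hzI
    have e2 := hFrep z hzI
    have e3 := hPrep _ hwI
    have e4 : 1 - (1 - α + α * z) = α * (1 - z) := by ring
    rw [e4] at e3
    have e5 := hFE z hzI
    -- (1-z) * SP z = 1 - P z = (1 - F z) + F z * (1 - P w)
    have e6 : (1 - z) * (∑' r : ℕ, p r * (∑ i ∈ range r, z ^ i))
        = (1 - F z) + F z * (1 - P (1 - α + α * z)) := by
      rw [← e1, e5]; ring
    rw [e6, e2, e3]
    ring
  -- take limits
  have hlim2 : Tendsto (fun z : ℝ =>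
      (∑' k : ℕ, f k * (∑ i ∈ range k, z ^ i)) +
        α * (F z * ∑' r : ℕ, p r * (∑ i ∈ range r, (1 - α + α * z) ^ i)))
      (𝓝[<] (1:ℝ)) (𝓝 (μ + α * (1 * ν))) :=
    hSF.add (tendsto_const_nhds.mul (hFlim.mul (hSP.comp hwt)))
  have hmean_eq : ν = μ + α * (1 * ν) := by
    refine tendsto_nhds_unique hSP (hlim2.congr' ?_)
    filter_upwards [hmemIco] with z hz
    exact (hmeq z hz).symm
  have hνval : ν = μ / (1 - α) := by
    rw [eq_div_iff (ne_of_gt h1a)]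
    nlinarith [hmean_eq]
  have h1a2 : (0:ℝ) < 1 - α ^ 2 := by nlinarith
  -- half second factorial moments
  have hSf2hsum : Summable fun k : ℕ => f k * ((k:ℝ) * ((k:ℝ) - 1) / 2) :=
    ((hmom2.sub hmean).div_const 2).congr fun k => by push_cast; ring
  set μ2h : ℝ := ∑' k : ℕ, f k * ((k:ℝ) * ((k:ℝ) - 1) / 2) with hμ2hdef
  have hμ2h0 : 0 ≤ μ2h := tsum_nonneg fun k => mul_nonneg (hf0 k) (cknn k)
  have h8 : ν = μ + α * ν := by linarith [hmean_eq]
  -- HasSum facts for second differences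
  have hD1 : ∀ z ∈ Set.Icc (0:ℝ) 1,
      HasSum (fun k : ℕ => f k * ((k:ℝ) * (1 - z) - (1 - z ^ k))) (μ * (1 - z) - (1 - F z)) :=
    fun z hz => ((hmean.hasSum.mul_right (1 - z)).sub (pmf_hasSum_one_sub hf0 hf1 hz)).congr_fun
      (fun k => by ring)
  have hE1 : ∀ z ∈ Set.Icc (0:ℝ) 1,
      HasSum (fun r : ℕ => p r * ((r:ℝ) * (1 - z) - (1 - z ^ r))) (ν * (1 - z) - (1 - P z)) :=
    fun z hz => ((hνsum.hasSum.mul_right (1 - z)).sub (hsub1P z hz)).congr_fun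
      (fun r => by ring)
  have hD1ub : ∀ z ∈ Set.Icc (0:ℝ) 1, μ * (1 - z) - (1 - F z) ≤ μ2h * (1 - z) ^ 2 := by
    intro z hz
    rw [← (hD1 z hz).tsum_eq]
    have h2 : HasSum (fun k : ℕ => f k * ((k:ℝ) * ((k:ℝ) - 1) / 2) * (1 - z) ^ 2)
        (μ2h * (1 - z) ^ 2) := hSf2hsum.hasSum.mul_right _
    rw [← h2.tsum_eq]
    refine Summable.tsum_le_tsum (fun k => ?_) (hD1 z hz).summable h2.summable
    rw [geom2_id z k]
    have h3 := G_le hz k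
    have h4 := mul_nonneg (mul_nonneg (hf0 k) (sub_nonneg.2 h3)) (sq_nonneg (1 - z))
    nlinarith [h4]
  have hE1nn : ∀ z ∈ Set.Icc (0:ℝ) 1, 0 ≤ ν * (1 - z) - (1 - P z) := by
    intro z hz
    rw [← (hE1 z hz).tsum_eq]
    refine tsum_nonneg fun r => mul_nonneg (hp0 r) ?_
    rw [geom2_id z r]
    exact mul_nonneg (sq_nonneg _) (G_nonneg hz.1 r)
  have hE1ub : ∀ z ∈ Set.Icc (0:ℝ) 1, ν * (1 - z) - (1 - P z) ≤ ν * (1 - z) := by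
    intro z hz
    have h1 := hP1 z hz
    linarith
  -- the exact one-step identity
  have hid : ∀ z ∈ Set.Icc (0:ℝ) 1,
      ν * (1 - z) - (1 - P z)
        = (μ * (1 - z) - (1 - F z)) + (1 - F z) * (α * ν * (1 - z))
          + F z * (ν * (1 - (1 - α + α * z)) - (1 - P (1 - α + α * z))) := by
    intro z hz
    have e5 := hFE z hz
    rw [e5]
    linear_combination (1 - z) * h8
  -- one-step inequality for the second difference
  have hstep2 : ∀ z ∈ Set.Icc (0:ℝ) 1,
      ν * (1 - z) - (1 - P z) ≤ (μ2h + α * ν * μ) * (1 - z) ^ 2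
        + (ν * (1 - (1 - α + α * z)) - (1 - P (1 - α + α * z))) := by
    intro z hz
    have h2 := hD1ub z hz
    have h3 := hFub z hz
    have h4 := hF1 z hz
    have h6 := hE1nn _ (hwmem z hz)
    have ha5 := hid z hz
    have t1 : 0 ≤ α * ν * (1 - z) :=
      mul_nonneg (mul_nonneg (le_of_lt hα0) hν0) (by linarith [hz.2])
    have ineq1 : (1 - F z) * (α * ν * (1 - z)) ≤ α * ν * μ * (1 - z) ^ 2 := by
      nlinarith [mul_le_mul_of_nonneg_right h3 t1]
    have ineq2 : F z * (ν * (1 - (1 - α + α * z)) - (1 - P (1 - α + α * z)))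
        ≤ ν * (1 - (1 - α + α * z)) - (1 - P (1 - α + α * z)) := by
      nlinarith [mul_le_mul_of_nonneg_right h4 h6]
    nlinarith [ha5, h2, ineq1, ineq2]
  -- iterate
  have hiter2 : ∀ z ∈ Set.Icc (0:ℝ) 1, ∀ n : ℕ,
      ν * (1 - z) - (1 - P z) ≤ (μ2h + α * ν * μ) * (1 - z) ^ 2 * (∑ j ∈ range n, (α ^ 2) ^ j)
        + (ν * (α ^ n * (1 - z)) - (1 - P (1 - α ^ n * (1 - z)))) := by
    intro z hz n
    induction n with
    | zero =>
        have e : 1 - α ^ 0 * (1 - z) = z := by ring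
        rw [e]
        simp
    | succ n ih =>
        have h1 := hstep2 _ (hzseqmem z hz n)
        have e1 : 1 - (1 - α ^ n * (1 - z)) = α ^ n * (1 - z) := by ring
        have e2 : 1 - α + α * (1 - α ^ n * (1 - z)) = 1 - α ^ (n + 1) * (1 - z) := by ring
        rw [e1, e2] at h1
        have e3 : 1 - (1 - α ^ (n + 1) * (1 - z)) = α ^ (n + 1) * (1 - z) := by ring
        rw [e3] at h1
        have e5 : (α ^ n * (1 - z)) ^ 2 = (α ^ 2) ^ n * (1 - z) ^ 2 := by ring
        rw [e5] at h1
        rw [Finset.sum_range_succ]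
        nlinarith [h1, ih]
  -- uniform second-order bound
  have hK0 : 0 ≤ μ2h + α * ν * μ :=
    add_nonneg hμ2h0 (mul_nonneg (mul_nonneg (le_of_lt hα0) hν0) hμ0)
  have hgs2 : ∀ n : ℕ, (∑ j ∈ range n, (α ^ 2) ^ j) ≤ 1 / (1 - α ^ 2) := by
    intro n
    have h1 := geom_id (α ^ 2) n
    have h2 : (0:ℝ) ≤ (α ^ 2) ^ n := pow_nonneg (sq_nonneg α) n
    rw [le_div_iff₀ h1a2]
    nlinarith
  have hE1bound : ∀ z ∈ Set.Icc (0:ℝ) 1,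
      ν * (1 - z) - (1 - P z) ≤ (μ2h + α * ν * μ) * (1 - z) ^ 2 / (1 - α ^ 2) := by
    intro z hz
    have hb : ∀ n : ℕ, ν * (1 - z) - (1 - P z)
        - (μ2h + α * ν * μ) * (1 - z) ^ 2 / (1 - α ^ 2) ≤ ν * (1 - z) * α ^ n := by
      intro n
      have h1 := hiter2 z hz n
      have h2 := hE1ub _ (hzseqmem z hz n)
      have e1 : 1 - (1 - α ^ n * (1 - z)) = α ^ n * (1 - z) := by ring
      rw [e1] at h2
      have h3 : (μ2h + α * ν * μ) * (1 - z) ^ 2 * (∑ j ∈ range n, (α ^ 2) ^ j)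
          ≤ (μ2h + α * ν * μ) * (1 - z) ^ 2 / (1 - α ^ 2) := by
        have h4 : 0 ≤ (μ2h + α * ν * μ) * (1 - z) ^ 2 := mul_nonneg hK0 (sq_nonneg _)
        calc (μ2h + α * ν * μ) * (1 - z) ^ 2 * (∑ j ∈ range n, (α ^ 2) ^ j)
            ≤ (μ2h + α * ν * μ) * (1 - z) ^ 2 * (1 / (1 - α ^ 2)) :=
              mul_le_mul_of_nonneg_left (hgs2 n) h4
          _ = (μ2h + α * ν * μ) * (1 - z) ^ 2 / (1 - α ^ 2) := by ring
      nlinarith [h1, h2, h3]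
    have ht : Tendsto (fun n : ℕ => ν * (1 - z) * α ^ n) atTop (𝓝 0) := by
      simpa using (tendsto_pow_atTop_nhds_zero_of_lt_one (le_of_lt hα0) hα1).const_mul
        (ν * (1 - z))
    have := ge_of_tendsto' ht hb
    linarith
  -- summability of the half second factorial moment of p
  have hc2sum : Summable fun r : ℕ => p r * ((r:ℝ) * ((r:ℝ) - 1) / 2) := by
    refine summable_of_sum_range_le (c := (μ2h + α * ν * μ) / (1 - α ^ 2))
      (fun r => mul_nonneg (hp0 r) (cknn r)) (fun N => ?_)
    have hb : ∀ z ∈ Set.Ico (0:ℝ) 1,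
        ∑ r ∈ range N, p r * (∑ j ∈ range r, ∑ i ∈ range j, z ^ i)
          ≤ (μ2h + α * ν * μ) / (1 - α ^ 2) := by
      intro z hz
      have hzI : z ∈ Set.Icc (0:ℝ) 1 := ⟨hz.1, le_of_lt hz.2⟩
      have h1z : (0:ℝ) < (1 - z) ^ 2 := by nlinarith [hz.2]
      refine le_of_mul_le_mul_left ?_ h1z
      have e1 : (1 - z) ^ 2 * ∑ r ∈ range N, p r * (∑ j ∈ range r, ∑ i ∈ range j, z ^ i)
          = ∑ r ∈ range N, p r * ((r:ℝ) * (1 - z) - (1 - z ^ r)) := by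
        rw [Finset.mul_sum]
        exact Finset.sum_congr rfl fun r _ => by rw [geom2_id z r]; ring
      rw [e1]
      have h2 : ∑ r ∈ range N, p r * ((r:ℝ) * (1 - z) - (1 - z ^ r))
          ≤ ν * (1 - z) - (1 - P z) := by
        rw [← (hE1 z hzI).tsum_eq]
        refine Summable.sum_le_tsum (range N) (fun r _ => ?_) (hE1 z hzI).summable
        refine mul_nonneg (hp0 r) ?_
        rw [geom2_id z r]
        exact mul_nonneg (sq_nonneg _) (G_nonneg hzI.1 r)
      calc ∑ r ∈ range N, p r * ((r:ℝ) * (1 - z) - (1 - z ^ r))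
          ≤ ν * (1 - z) - (1 - P z) := h2
        _ ≤ (μ2h + α * ν * μ) * (1 - z) ^ 2 / (1 - α ^ 2) := hE1bound z hzI
        _ = (1 - z) ^ 2 * ((μ2h + α * ν * μ) / (1 - α ^ 2)) := by ring
    have hcont : Tendsto (fun z => ∑ r ∈ range N, p r * (∑ j ∈ range r, ∑ i ∈ range j, z ^ i))
        (𝓝[<] (1:ℝ)) (𝓝 (∑ r ∈ range N, p r * (∑ j ∈ range r, ∑ i ∈ range j, (1:ℝ) ^ i))) := by
      apply Tendsto.mono_left _ nhdsWithin_le_nhds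
      refine Continuous.tendsto ?_ 1
      exact continuous_finset_sum _ fun r _ => continuous_const.mul
        (continuous_finset_sum _ fun j _ => continuous_finset_sum _ fun i _ => continuous_pow i)
    have h4 : ∑ r ∈ range N, p r * (∑ j ∈ range r, ∑ i ∈ range j, (1:ℝ) ^ i)
        ≤ (μ2h + α * ν * μ) / (1 - α ^ 2) := by
      refine le_of_tendsto hcont ?_
      filter_upwards [hmemIco] with z hz
      exact hb z hz
    calc ∑ r ∈ range N, p r * ((r:ℝ) * ((r:ℝ) - 1) / 2)
        = ∑ r ∈ range N, p r * (∑ j ∈ range r, ∑ i ∈ range j, (1:ℝ) ^ i) :=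
          Finset.sum_congr rfl fun r _ => by rw [G_one]
      _ ≤ (μ2h + α * ν * μ) / (1 - α ^ 2) := h4
  set ν2h : ℝ := ∑' r : ℕ, p r * ((r:ℝ) * ((r:ℝ) - 1) / 2) with hν2hdef
  -- summability of second moments of p
  have hmom2p : Summable fun r : ℕ => (r:ℝ) ^ 2 * p r :=
    ((hc2sum.mul_left 2).add hνsum).congr fun r => by push_cast; ring
  -- summable G-representations
  have hsumPG : ∀ z ∈ Set.Icc (0:ℝ) 1,
      Summable fun r : ℕ => p r * (∑ j ∈ range r, ∑ i ∈ range j, z ^ i) := by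
    intro z hz
    refine Summable.of_nonneg_of_le (fun r => mul_nonneg (hp0 r) (G_nonneg hz.1 r))
      (fun r => mul_le_mul_of_nonneg_left (G_le hz r) (hp0 r)) hc2sum
  have hsumFG : ∀ z ∈ Set.Icc (0:ℝ) 1,
      Summable fun k : ℕ => f k * (∑ j ∈ range k, ∑ i ∈ range j, z ^ i) := by
    intro z hz
    refine Summable.of_nonneg_of_le (fun k => mul_nonneg (hf0 k) (G_nonneg hz.1 k))
      (fun k => mul_le_mul_of_nonneg_left (G_le hz k) (hf0 k)) hSf2hsum
  -- representations
  have hE1rep : ∀ z ∈ Set.Icc (0:ℝ) 1,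
      ν * (1 - z) - (1 - P z)
        = (1 - z) ^ 2 * ∑' r : ℕ, p r * (∑ j ∈ range r, ∑ i ∈ range j, z ^ i) := by
    intro z hz
    have h2 : HasSum (fun r : ℕ => (1 - z) ^ 2 * (p r * (∑ j ∈ range r, ∑ i ∈ range j, z ^ i)))
        (ν * (1 - z) - (1 - P z)) :=
      (hE1 z hz).congr_fun fun r => by rw [geom2_id z r]; ring
    exact h2.unique ((hsumPG z hz).hasSum.mul_left _)
  have hD1rep : ∀ z ∈ Set.Icc (0:ℝ) 1,
      μ * (1 - z) - (1 - F z)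
        = (1 - z) ^ 2 * ∑' k : ℕ, f k * (∑ j ∈ range k, ∑ i ∈ range j, z ^ i) := by
    intro z hz
    have h2 : HasSum (fun k : ℕ => (1 - z) ^ 2 * (f k * (∑ j ∈ range k, ∑ i ∈ range j, z ^ i)))
        (μ * (1 - z) - (1 - F z)) :=
      (hD1 z hz).congr_fun fun k => by rw [geom2_id z k]; ring
    exact h2.unique ((hsumFG z hz).hasSum.mul_left _)
  -- limits of the G-tsums
  have hTP : Tendsto (fun z => ∑' r : ℕ, p r * (∑ j ∈ range r, ∑ i ∈ range j, z ^ i))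
      (𝓝[<] (1:ℝ)) (𝓝 ν2h) := by
    have hs1 : Summable fun r : ℕ => p r * (∑ j ∈ range r, ∑ i ∈ range j, (1:ℝ) ^ i) :=
      hc2sum.congr fun r => by rw [G_one]
    have h0 := tendsto_tsum_poly p hp0 (fun r z => ∑ j ∈ range r, ∑ i ∈ range j, z ^ i)
      (fun r => continuous_finset_sum _ fun j _ => continuous_finset_sum _ fun i _ =>
        continuous_pow i)
      (fun r z hz => G_nonneg hz.1 r)
      (fun r z hz => by
        refine Finset.sum_le_sum fun j _ => ?_
        simpa [h_one] using h_le ⟨hz.1, le_of_lt hz.2⟩ j)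
      hs1
    have h0' : Tendsto (fun z => ∑' r : ℕ, p r * (∑ j ∈ range r, ∑ i ∈ range j, z ^ i))
        (𝓝[<] (1:ℝ)) (𝓝 (∑' r : ℕ, p r * (∑ j ∈ range r, ∑ i ∈ range j, (1:ℝ) ^ i))) := h0
    have e : (∑' r : ℕ, p r * (∑ j ∈ range r, ∑ i ∈ range j, (1:ℝ) ^ i)) = ν2h :=
      tsum_congr fun r => by rw [G_one]
    rwa [e] at h0'
  have hTF : Tendsto (fun z => ∑' k : ℕ, f k * (∑ j ∈ range k, ∑ i ∈ range j, z ^ i))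
      (𝓝[<] (1:ℝ)) (𝓝 μ2h) := by
    have hs1 : Summable fun k : ℕ => f k * (∑ j ∈ range k, ∑ i ∈ range j, (1:ℝ) ^ i) :=
      hSf2hsum.congr fun k => by rw [G_one]
    have h0 := tendsto_tsum_poly f hf0 (fun k z => ∑ j ∈ range k, ∑ i ∈ range j, z ^ i)
      (fun k => continuous_finset_sum _ fun j _ => continuous_finset_sum _ fun i _ =>
        continuous_pow i)
      (fun k z hz => G_nonneg hz.1 k)
      (fun k z hz => by
        refine Finset.sum_le_sum fun j _ => ?_
        simpa [h_one] using h_le ⟨hz.1, le_of_lt hz.2⟩ j)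
      hs1
    have h0' : Tendsto (fun z => ∑' k : ℕ, f k * (∑ j ∈ range k, ∑ i ∈ range j, z ^ i))
        (𝓝[<] (1:ℝ)) (𝓝 (∑' k : ℕ, f k * (∑ j ∈ range k, ∑ i ∈ range j, (1:ℝ) ^ i))) := h0
    have e : (∑' k : ℕ, f k * (∑ j ∈ range k, ∑ i ∈ range j, (1:ℝ) ^ i)) = μ2h :=
      tsum_congr fun k => by rw [G_one]
    rwa [e] at h0'
  -- the second-moment equation
  have hmeq2 : ∀ z ∈ Set.Ico (0:ℝ) 1,
      (∑' r : ℕ, p r * (∑ j ∈ range r, ∑ i ∈ range j, z ^ i))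
        = (∑' k : ℕ, f k * (∑ j ∈ range k, ∑ i ∈ range j, z ^ i))
          + α * ν * (∑' k : ℕ, f k * (∑ i ∈ range k, z ^ i))
          + α ^ 2 * (F z *
              ∑' r : ℕ, p r * (∑ j ∈ range r, ∑ i ∈ range j, (1 - α + α * z) ^ i)) := by
    intro z hz
    have hzI : z ∈ Set.Icc (0:ℝ) 1 := ⟨hz.1, le_of_lt hz.2⟩
    have hwI := hwmem z hzI
    have h1zne : (1 - z) ≠ 0 := by
      intro h
      rw [sub_eq_zero] at h
      exact (ne_of_lt hz.2) h.symm
    have a1 := hE1rep z hzI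
    have a2 := hD1rep z hzI
    have a3 := hE1rep _ hwI
    have a4 := hFrep z hzI
    have a5 := hid z hzI
    have e4 : 1 - (1 - α + α * z) = α * (1 - z) := by ring
    rw [e4] at a3
    have key : (1 - z) ^ 2 * (∑' r : ℕ, p r * (∑ j ∈ range r, ∑ i ∈ range j, z ^ i))
        = (1 - z) ^ 2 * ((∑' k : ℕ, f k * (∑ j ∈ range k, ∑ i ∈ range j, z ^ i))
          + α * ν * (∑' k : ℕ, f k * (∑ i ∈ range k, z ^ i))
          + α ^ 2 * (F z *
              ∑' r : ℕ, p r * (∑ j ∈ range r, ∑ i ∈ range j, (1 - α + α * z) ^ i))) := by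
      linear_combination a5 - a1 + a2 + α * ν * (1 - z) * a4 + F z * a3
    exact mul_left_cancel₀ (pow_ne_zero 2 h1zne) key
  -- limits
  have hlim3 : Tendsto (fun z : ℝ =>
      (∑' k : ℕ, f k * (∑ j ∈ range k, ∑ i ∈ range j, z ^ i))
        + α * ν * (∑' k : ℕ, f k * (∑ i ∈ range k, z ^ i))
        + α ^ 2 * (F z *
            ∑' r : ℕ, p r * (∑ j ∈ range r, ∑ i ∈ range j, (1 - α + α * z) ^ i)))
      (𝓝[<] (1:ℝ)) (𝓝 (μ2h + α * ν * μ + α ^ 2 * (1 * ν2h))) :=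
    (hTF.add (tendsto_const_nhds.mul hSF)).add
      (tendsto_const_nhds.mul (hFlim.mul (hTP.comp hwt)))
  have h2meq : ν2h = μ2h + α * ν * μ + α ^ 2 * (1 * ν2h) := by
    refine tendsto_nhds_unique hTP (hlim3.congr' ?_)
    filter_upwards [hmemIco] with z hz
    exact (hmeq2 z hz).symm
  have hν2hval : ν2h = (μ2h + α * ν * μ) / (1 - α ^ 2) := by
    rw [eq_div_iff (ne_of_gt h1a2)]
    nlinarith [h2meq]
  -- final assembly
  have hM2p : (∑' r : ℕ, (r:ℝ) ^ 2 * p r) = 2 * ν2h + ν := by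
    have hA : HasSum (fun r : ℕ => 2 * (p r * ((r:ℝ) * ((r:ℝ) - 1) / 2)) + (r:ℝ) * p r)
        (2 * ν2h + ν) := (hc2sum.hasSum.mul_left 2).add hνsum.hasSum
    have hB : HasSum (fun r : ℕ => (r:ℝ) ^ 2 * p r) (2 * ν2h + ν) :=
      hA.congr_fun fun r => by push_cast; ring
    exact hB.tsum_eq
  have hM2f : (∑' k : ℕ, (k:ℝ) ^ 2 * f k) = 2 * μ2h + μ := by
    have hA : HasSum (fun k : ℕ => 2 * (f k * ((k:ℝ) * ((k:ℝ) - 1) / 2)) + (k:ℝ) * f k)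
        (2 * μ2h + μ) := (hSf2hsum.hasSum.mul_left 2).add hmean.hasSum
    have hB : HasSum (fun k : ℕ => (k:ℝ) ^ 2 * f k) (2 * μ2h + μ) :=
      hA.congr_fun fun k => by push_cast; ring
    exact hB.tsum_eq
  refine ⟨hνsum, hmom2p, hνval, ?_⟩
  rw [hM2p, hM2f, hν2hval, hνval]
  have hne1 : (1 - α) ≠ 0 := ne_of_gt h1a
  have hne2 : (1 - α ^ 2) ≠ 0 := ne_of_gt h1a2
  field_simp
  ring
end

section
/- Let α, p ∈ (0,1), let Ψ(z) = ln(1 − p z)/ln(1 − p) be the pgf of the logarithmic(p) distribution, and for i ≥ 0 set q_i = p α^i / (1 − p(1 − α^i)) and b_i = 1 − ln(1 − q_i)/ln(1 − p). Then q_i ∈ (0,1), b_i ∈ [0,1), b_0 = 0, q_0 = p, and for every z ∈ [0,1], Ψ(1 − α^i + α^i z) = b_i + (1 − b_i) · ln(1 − q_i z)/ln(1 − q_i); equivalently, the pmf with pgf z ↦ Ψ(1 − α^i + α^i z) is the two-component mixture assigning probability b_i to the point 0 and probability (1 − b_i) · q_i^r / (−r ln(1 − q_i)) to each r ≥ 1.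 -/
/-- Let `α, p ∈ (0,1)`, let `Ψ(z) = ln(1 − p z)/ln(1 − p)` be the pgf of the
logarithmic(p) distribution, and for `i ≥ 0` set `q_i = p α^i / (1 − p(1 − α^i))` and
`b_i = 1 − ln(1 − q_i)/ln(1 − p)`. Then `q_i ∈ (0,1)`, `b_i ∈ [0,1)`, `b_0 = 0`, `q_0 = p`,
and for every `z ∈ [0,1]`,
`Ψ(1 − α^i + α^i z) = b_i + (1 − b_i)·ln(1 − q_i z)/ln(1 − q_i)`; equivalently, the pmf with
pgf `z ↦ Ψ(1 − α^i + α^i z)` is the mixture assigning probability `b_i` to `0` and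
`(1 − b_i)·q_i^r/(−r ln(1 − q_i))` to each `r ≥ 1`. -/
theorem stmt_8 (α p : ℝ) (hα : α ∈ Set.Ioo (0 : ℝ) 1) (hp : p ∈ Set.Ioo (0 : ℝ) 1)
    (Ψ : ℝ → ℝ) (hΨ : ∀ z, Ψ z = Real.log (1 - p * z) / Real.log (1 - p))
    (q b : ℕ → ℝ)
    (hq : ∀ i, q i = p * α ^ i / (1 - p * (1 - α ^ i)))
    (hb : ∀ i, b i = 1 - Real.log (1 - q i) / Real.log (1 - p)) :
    (∀ i, q i ∈ Set.Ioo (0 : ℝ) 1) ∧ (∀ i, b i ∈ Set.Ico (0 : ℝ) 1) ∧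
    b 0 = 0 ∧ q 0 = p ∧
    (∀ i, ∀ z ∈ Set.Icc (0 : ℝ) 1,
      Ψ (1 - α ^ i + α ^ i * z) =
        b i + (1 - b i) * (Real.log (1 - q i * z) / Real.log (1 - q i))) ∧
    (∀ i, ∀ z ∈ Set.Icc (0 : ℝ) 1,
      HasSum
        (fun r : ℕ =>
          (if r = 0 then b i else (1 - b i) * (q i) ^ r / (-(r : ℝ) * Real.log (1 - q i)))
            * z ^ r)
        (Ψ (1 - α ^ i + α ^ i * z))) := by
  obtain ⟨hα0, hα1⟩ := hα
  obtain ⟨hp0, hp1⟩ := hp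
  have hLp : Real.log (1 - p) < 0 := Real.log_neg (by linarith) (by linarith)
  have hLpne : Real.log (1 - p) ≠ 0 := ne_of_lt hLp
  have hd : ∀ i : ℕ, 1 - p < 1 - p * (1 - α ^ i) ∧ 1 - p * (1 - α ^ i) ≤ 1 := by
    intro i
    have ha0 : 0 < α ^ i := pow_pos hα0 i
    have ha1 : α ^ i ≤ 1 := pow_le_one₀ hα0.le hα1.le
    constructor <;> nlinarith
  have hq01 : ∀ i, 0 < q i ∧ q i < 1 := by
    intro i
    obtain ⟨h1, h2⟩ := hd i
    have ha0 : 0 < α ^ i := pow_pos hα0 i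
    have hdpos : 0 < 1 - p * (1 - α ^ i) := by linarith
    rw [hq]
    refine ⟨by positivity, ?_⟩
    rw [div_lt_one hdpos]; nlinarith
  have honeq : ∀ i, 1 - q i = (1 - p) / (1 - p * (1 - α ^ i)) := by
    intro i
    obtain ⟨h1, h2⟩ := hd i
    have hdpos : 0 < 1 - p * (1 - α ^ i) := by linarith
    rw [hq]
    field_simp
    ring
  have hLq : ∀ i, Real.log (1 - q i) < 0 := by
    intro i
    obtain ⟨h1, h2⟩ := hq01 i
    exact Real.log_neg (by linarith) (by linarith)
  have hLqne : ∀ i, Real.log (1 - q i) ≠ 0 := fun i => ne_of_lt (hLq i)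
  have hlogdiff : ∀ i, Real.log (1 - q i)
      = Real.log (1 - p) - Real.log (1 - p * (1 - α ^ i)) := by
    intro i
    obtain ⟨h1, h2⟩ := hd i
    have hdpos : 0 < 1 - p * (1 - α ^ i) := by linarith
    rw [honeq i, Real.log_div (by linarith) (ne_of_gt hdpos)]
  have hbformula : ∀ i, b i = Real.log (1 - p * (1 - α ^ i)) / Real.log (1 - p) := by
    intro i
    rw [hb, hlogdiff i]
    field_simp
    ring
  have h1b : ∀ i, 1 - b i = Real.log (1 - q i) / Real.log (1 - p) := by
    intro i
    rw [hb]
    ring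
  have hb01 : ∀ i, 0 ≤ b i ∧ b i < 1 := by
    intro i
    obtain ⟨h1, h2⟩ := hd i
    have hdpos : 0 < 1 - p * (1 - α ^ i) := by linarith
    have hld : Real.log (1 - p * (1 - α ^ i)) ≤ 0 := Real.log_nonpos (by linarith) h2
    have hld2 : Real.log (1 - p) < Real.log (1 - p * (1 - α ^ i)) :=
      Real.log_lt_log (by linarith) h1
    rw [hbformula i]
    constructor
    · rw [div_nonneg_iff]
      exact Or.inr ⟨hld, hLp.le⟩
    · rw [div_lt_iff_of_neg hLp]
      linarith
  have hkey : ∀ i, ∀ z ∈ Set.Icc (0 : ℝ) 1,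
      Ψ (1 - α ^ i + α ^ i * z) =
        b i + (1 - b i) * (Real.log (1 - q i * z) / Real.log (1 - q i)) := by
    intro i z hz
    obtain ⟨hz0, hz1⟩ := hz
    obtain ⟨h1, h2⟩ := hd i
    obtain ⟨hq0, hq1⟩ := hq01 i
    have hdpos : 0 < 1 - p * (1 - α ^ i) := by linarith
    have hqz : q i * z < 1 := by nlinarith
    have hfac : 1 - p * (1 - α ^ i + α ^ i * z)
        = (1 - p * (1 - α ^ i)) * (1 - q i * z) := by
      rw [hq]
      field_simp
      ring
    have e1 := hLqne i
    rw [hΨ, hfac, Real.log_mul (ne_of_gt hdpos) (by linarith), h1b i, hbformula i]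
    field_simp
  refine ⟨fun i => ⟨(hq01 i).1, (hq01 i).2⟩, fun i => ⟨(hb01 i).1, (hb01 i).2⟩, ?_, ?_, hkey, ?_⟩
  · rw [hbformula 0]; simp
  · rw [hq 0]; simp
  · intro i z hz
    obtain ⟨hz0, hz1⟩ := hz
    obtain ⟨hq0, hq1⟩ := hq01 i
    have e1 := hLqne i
    have hxlt : |q i * z| < 1 := by
      rw [abs_of_nonneg (by positivity)]
      nlinarith
    have hs := (Real.hasSum_pow_div_log_of_abs_lt_one hxlt).mul_right
      (-1 / Real.log (1 - p))
    rw [show -Real.log (1 - q i * z) * (-1 / Real.log (1 - p))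
        = Real.log (1 - q i * z) / Real.log (1 - p) by ring] at hs
    have heq : ∀ n : ℕ,
        (if n + 1 = 0 then b i else (1 - b i) * q i ^ (n + 1)
          / (-(((n + 1 : ℕ) : ℝ)) * Real.log (1 - q i))) * z ^ (n + 1)
        = (q i * z) ^ (n + 1) / ((n : ℝ) + 1) * (-1 / Real.log (1 - p)) := by
      intro n
      have hn : ((n : ℝ) + 1) ≠ 0 := by positivity
      rw [if_neg (Nat.succ_ne_zero n), h1b i, mul_pow]
      push_cast
      rw [neg_mul, div_neg]
      field_simp
    refine (hasSum_nat_add_iff' 1).mp ?_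
    have hval : Ψ (1 - α ^ i + α ^ i * z) - ∑ j ∈ Finset.range 1,
        (if j = 0 then b i else (1 - b i) * q i ^ j / (-(j : ℝ) * Real.log (1 - q i)))
          * z ^ j = Real.log (1 - q i * z) / Real.log (1 - p) := by
      rw [hkey i z ⟨hz0, hz1⟩, h1b i]
      simp
      field_simp
    rw [hval]
    convert hs using 1
    · rfl
    funext n
    exact heq n
end

section
/- Let α, p ∈ (0,1), let Ψ(z) = ln(1 − p z)/ln(1 − p) be the pgf of the logarithmic(p) distribution, and for i ≥ 0 set q_i = p α^i / (1 − p(1 − α^i)). Then the marginal pgf φ(z) = ∏_{i=0}^∞ Ψ(1 − α^i + α^i z) of the stationary INAR(1) process with logarithmic(p) innovations admits, for every z ∈ [0,1], the representation φ(z) = ∏_{i=0}^∞ [ 1 − (1/ln(1−p)) · ln( (1 − q_i) / (1 − q_i z) ) ]. -/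
/-- Let `α, p ∈ (0,1)`, let `Ψ(z) = ln(1 − p z)/ln(1 − p)` be the pgf of the
logarithmic(p) distribution, and for `i ≥ 0` set `q_i = p α^i / (1 − p(1 − α^i))`. Then the
marginal pgf `φ(z) = ∏_{i=0}^∞ Ψ(1 − α^i + α^i z)` of the stationary INAR(1) process with
logarithmic(p) innovations satisfies, for every `z ∈ [0,1]`,
`φ(z) = ∏_{i=0}^∞ [1 − (1/ln(1−p))·ln((1 − q_i)/(1 − q_i z))]`. -/
theorem stmt_9 (α p : ℝ) (hα : α ∈ Set.Ioo (0 : ℝ) 1) (hp : p ∈ Set.Ioo (0 : ℝ) 1)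
    (Ψ : ℝ → ℝ) (hΨ : ∀ z, Ψ z = Real.log (1 - p * z) / Real.log (1 - p))
    (q : ℕ → ℝ) (hq : ∀ i, q i = p * α ^ i / (1 - p * (1 - α ^ i)))
    (φ : ℝ → ℝ) (hφ : ∀ z, φ z = ∏' i : ℕ, Ψ (1 - α ^ i + α ^ i * z)) :
    ∀ z ∈ Set.Icc (0 : ℝ) 1,
      φ z = ∏' i : ℕ,
        (1 - (1 / Real.log (1 - p)) * Real.log ((1 - q i) / (1 - q i * z))) := by
  obtain ⟨hα0, hα1⟩ := hα
  obtain ⟨hp0, hp1⟩ := hp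
  intro z hz
  obtain ⟨hz0, hz1⟩ := hz
  have hLne : Real.log (1 - p) ≠ 0 :=
    ne_of_lt (Real.log_neg (by linarith) (by linarith))
  rw [hφ z]
  refine tprod_congr fun i => ?_
  have ha0 : 0 < α ^ i := pow_pos hα0 i
  have ha1 : α ^ i ≤ 1 := pow_le_one₀ hα0.le hα1.le
  set a := α ^ i with hadef
  have hD : 0 < 1 - p * (1 - a) := by nlinarith
  have hqi : q i = p * a / (1 - p * (1 - a)) := hq i
  have hq0 : 0 < q i := by rw [hqi]; positivity
  have hq1 : q i < 1 := by rw [hqi, div_lt_one hD]; nlinarith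
  have h1q : 1 - q i = (1 - p) / (1 - p * (1 - a)) := by
    rw [hqi]; field_simp; ring
  have hqz : 0 < 1 - q i * z := by nlinarith
  have key : 1 - p * (1 - a + a * z) = (1 - p * (1 - a)) * (1 - q i * z) := by
    rw [hqi]; field_simp; ring
  rw [hΨ, key, Real.log_mul (ne_of_gt hD) (ne_of_gt hqz)]
  have hlogD : Real.log (1 - p * (1 - a)) = Real.log (1 - p) - Real.log (1 - q i) := by
    rw [h1q, Real.log_div (by linarith) (ne_of_gt hD)]; ring
  rw [hlogD, Real.log_div (ne_of_gt (by linarith : (0:ℝ) < 1 - q i)) (ne_of_gt hqz)]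
  field_simp
  ring
end
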